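/- arXiv:2211.05175 — 3 statements merged into one kernel-verified Lean document; each statement's English description precedes it below -/
import Mathlib

section
/- Let k ≥ 1. For λ = (λ₀,…,λ_{2k−1}) ∈ ℝ^{2k} set P_λ(x) = x^{2k} + λ_{2k−1}x^{2k−1} + ⋯ + λ₁x + λ₀, let Σ_ℝ = {λ ∈ ℝ^{2k} : P_λ(0) = 0, or there exists x ∈ ℝ with P_λ(x) = 0 and P_λ′(x) = 0}, and for λ ∉ Σ_ℝ let V_λ = {(x,y) ∈ ℝ² : P_λ(x) + y² = 0}. Call a connected component Γ of ℝ^{2k} ∖ Σ_ℝ a lacuna if for every λ ∈ Γ either V_λ is empty or every connected component of V_λ intersects the line {x = 0}. Then exactly 2 connected components of ℝ^{2k} ∖ Σ_ℝ are lacunas. -/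
/-- `P_λ(x) = x^d + λ_{d−1}x^{d−1} + ⋯ + λ₁x + λ₀` for `λ ∈ ℝ^d`. -/
def deformedPoly (d : ℕ) (l : Fin d → ℝ) (x : ℝ) : ℝ :=
  x ^ d + ∑ i, l i * x ^ (i : ℕ)

/-- The real discriminant of the miniversal deformation of the boundary singularity `B_d`. -/
def realDiscrB (d : ℕ) : Set (Fin d → ℝ) :=
  {l | deformedPoly d l 0 = 0 ∨
    ∃ x : ℝ, deformedPoly d l x = 0 ∧ deriv (deformedPoly d l) x = 0}

/-- The real zero level set `V_λ = {(x,y) ∈ ℝ² : P_λ(x) + y² = 0}` of the `B_d⁺` morsification. -/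
def levelSetBplus (d : ℕ) (l : Fin d → ℝ) : Set (ℝ × ℝ) :=
  {p | deformedPoly d l p.1 + p.2 ^ 2 = 0}

/-- A connected component `Γ` of the complement of the real discriminant is a lacuna if for
every `λ ∈ Γ` the level set `V_λ` is empty or each of its connected components meets `{x = 0}`. -/
def IsLacuna (d : ℕ) (V : (Fin d → ℝ) → Set (ℝ × ℝ))
    (Γ : ConnectedComponents ↥((realDiscrB d)ᶜ)) : Prop :=
  ∀ l : ↥((realDiscrB d)ᶜ), ConnectedComponents.mk l = Γ →
    (V l.1 = ∅ ∨ ∀ p ∈ V l.1, ∃ q ∈ connectedComponentIn (V l.1) p, q.1 = 0)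

open Polynomial in
noncomputable def toPoly (d : ℕ) (l : Fin d → ℝ) : Polynomial ℝ :=
  X ^ d + ∑ i : Fin d, C (l i) * X ^ (i : ℕ)

open Polynomial

lemma eval_toPoly (d : ℕ) (l : Fin d → ℝ) (x : ℝ) :
    (toPoly d l).eval x = deformedPoly d l x := by
  simp [toPoly, deformedPoly, eval_finset_sum]

lemma deformedPoly_eq (d : ℕ) (l : Fin d → ℝ) :
    deformedPoly d l = fun x => (toPoly d l).eval x :=
  funext fun x => (eval_toPoly d l x).symm

lemma deriv_deformedPoly (d : ℕ) (l : Fin d → ℝ) (x : ℝ) :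
    deriv (deformedPoly d l) x = (toPoly d l).derivative.eval x := by
  rw [deformedPoly_eq]; exact Polynomial.deriv (p := toPoly d l)

lemma continuous_deformedPoly (d : ℕ) (l : Fin d → ℝ) :
    Continuous (deformedPoly d l) := by
  rw [deformedPoly_eq]; exact (toPoly d l).continuous

lemma coeff_toPoly (d : ℕ) (l : Fin d → ℝ) (n : ℕ) :
    (toPoly d l).coeff n = (if n = d then 1 else 0) + (if h : n < d then l ⟨n, h⟩ else 0) := by
  simp only [toPoly, coeff_add, coeff_X_pow, finset_sum_coeff, coeff_C_mul]
  congr 1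
  split_ifs with h
  · rw [Finset.sum_eq_single (⟨n, h⟩ : Fin d)]
    · simp
    · intro b _ hb
      rw [if_neg, mul_zero]
      exact fun he => hb (by ext; simp [he.symm])
    · intro hb; exact absurd (Finset.mem_univ _) hb
  · apply Finset.sum_eq_zero
    intro b _
    rw [if_neg, mul_zero]
    exact fun he => h (he ▸ b.isLt)

lemma degree_sum_lt (d : ℕ) (l : Fin d → ℝ) :
    (∑ i : Fin d, C (l i) * X ^ (i : ℕ) : Polynomial ℝ).degree < d := by
  apply lt_of_le_of_lt (Polynomial.degree_sum_le _ _)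
  rw [Finset.sup_lt_iff (by exact_mod_cast WithBot.bot_lt_coe d)]
  intro i _
  apply lt_of_le_of_lt (degree_mul_le _ _)
  apply lt_of_le_of_lt (add_le_add (degree_C_le) (degree_X_pow_le _))
  rw [zero_add]
  exact_mod_cast i.isLt

lemma toPoly_monic (d : ℕ) (l : Fin d → ℝ) : (toPoly d l).Monic := by
  have h := degree_sum_lt d l
  exact (monic_X_pow d).add_of_left (by rw [degree_X_pow]; exact h)

lemma toPoly_natDegree (d : ℕ) (l : Fin d → ℝ) : (toPoly d l).natDegree = d := by
  have h := degree_sum_lt d l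
  have hdeg : (toPoly d l).degree = d := by
    rw [toPoly, degree_add_eq_left_of_degree_lt (by rwa [degree_X_pow]), degree_X_pow]
  exact natDegree_eq_of_degree_eq_some hdeg

lemma toPoly_of_monic {d : ℕ} {p : Polynomial ℝ} (hm : p.Monic)
    (hdeg : p.natDegree = d) : toPoly d (fun i => p.coeff i) = p := by
  ext n
  rw [coeff_toPoly]
  rcases lt_trichotomy n d with h | h | h
  · rw [if_neg h.ne, dif_pos h, zero_add]
  · subst h
    rw [if_pos rfl, dif_neg (lt_irrefl _), add_zero, ← hdeg] at *
    exact (hm.coeff_natDegree).symm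
  · rw [if_neg h.ne', dif_neg (not_lt.2 h.le), add_zero]
    exact (coeff_eq_zero_of_natDegree_lt (hdeg ▸ h)).symm

/-! ### Section 2: basic analytic facts -/

lemma deformedPoly_pos_of_abs_ge {d : ℕ} (he : Even d) (hd : 0 < d) (l : Fin d → ℝ) {x : ℝ}
    (hx : (∑ i, |l i|) + 1 ≤ |x|) : 0 < deformedPoly d l x := by
  have hS : 0 ≤ ∑ i, |l i| := Finset.sum_nonneg fun i _ => abs_nonneg _
  have h1 : (1:ℝ) ≤ |x| := le_trans (by linarith) hx
  have hxpos : 0 < |x| := lt_of_lt_of_le one_pos h1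
  have hb : |∑ i, l i * x ^ (i:ℕ)| ≤ (∑ i, |l i|) * |x| ^ (d-1) := by
    calc |∑ i, l i * x ^ (i:ℕ)| ≤ ∑ i, |l i * x ^ (i:ℕ)| := Finset.abs_sum_le_sum_abs _ _
    _ = ∑ i, |l i| * |x| ^ (i:ℕ) := by simp [abs_mul, abs_pow]
    _ ≤ ∑ i, |l i| * |x| ^ (d-1) := by
        apply Finset.sum_le_sum
        intro i _
        exact mul_le_mul_of_nonneg_left
          (pow_le_pow_right₀ h1 (Nat.le_sub_one_of_lt i.isLt)) (abs_nonneg _)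
    _ = (∑ i, |l i|) * |x| ^ (d-1) := (Finset.sum_mul _ _ _).symm
  have hxd : x ^ d = |x| ^ d := (he.pow_abs x).symm
  have hdd : |x| ^ d = |x| ^ (d-1) * |x| := by
    rw [← pow_succ, Nat.sub_add_cancel hd]
  have hpow : (0:ℝ) < |x| ^ (d-1) := pow_pos hxpos _
  have key : (∑ i, |l i|) * |x| ^ (d-1) < x ^ d := by
    rw [hxd, hdd]
    have : (∑ i, |l i|) < |x| := by linarith
    calc (∑ i, |l i|) * |x| ^ (d-1) = |x| ^ (d-1) * (∑ i, |l i|) := mul_comm _ _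
    _ < |x| ^ (d-1) * |x| := by exact mul_lt_mul_of_pos_left this hpow
  have := neg_abs_le (∑ i, l i * x ^ (i:ℕ))
  unfold deformedPoly
  linarith

lemma deformedPoly_convex_comb (d : ℕ) (l m : Fin d → ℝ) {a b : ℝ} (hab : a + b = 1) (x : ℝ) :
    deformedPoly d (a • l + b • m) x
      = a * deformedPoly d l x + b * deformedPoly d m x := by
  have h1 : ∑ i, (a * l i + b * m i) * x ^ (i:ℕ)
      = a * ∑ i, l i * x ^ (i:ℕ) + b * ∑ i, m i * x ^ (i:ℕ) := by
    rw [Finset.mul_sum, Finset.mul_sum, ← Finset.sum_add_distrib]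
    apply Finset.sum_congr rfl
    intros; ring
  simp only [deformedPoly, Pi.add_apply, Pi.smul_apply, smul_eq_mul, h1]
  linear_combination (-(x ^ d)) * hab

/-- the set of parameters where the polynomial is everywhere positive -/
def Spos (d : ℕ) : Set (Fin d → ℝ) := {l | ∀ x, 0 < deformedPoly d l x}

lemma convex_Spos (d : ℕ) : Convex ℝ (Spos d) := by
  intro l hl m hm a b ha hb hab
  intro x
  rw [deformedPoly_convex_comb d l m hab x]
  rcases lt_or_eq_of_le ha with h | h
  · nlinarith [mul_pos h (hl x), mul_nonneg hb (hm x).le]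
  · have hb1 : b = 1 := by linarith
    rw [← h, hb1]
    nlinarith [hm x]

lemma mem_levelSet {d : ℕ} {l : Fin d → ℝ} {p : ℝ × ℝ} :
    p ∈ levelSetBplus d l ↔ deformedPoly d l p.1 + p.2 ^ 2 = 0 := Iff.rfl

lemma sqrt_mem_levelSet {d : ℕ} {l : Fin d → ℝ} {x : ℝ} (h : deformedPoly d l x ≤ 0) :
    (x, Real.sqrt (-deformedPoly d l x)) ∈ levelSetBplus d l := by
  have : Real.sqrt (-deformedPoly d l x) ^ 2 = -deformedPoly d l x :=
    Real.sq_sqrt (neg_nonneg.2 h)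
  simp only [mem_levelSet, this]
  ring

lemma levelSet_eq_empty_iff {d : ℕ} {l : Fin d → ℝ} :
    levelSetBplus d l = ∅ ↔ ∀ x, 0 < deformedPoly d l x := by
  constructor
  · intro h x
    by_contra hx
    push_neg at hx
    exact Set.eq_empty_iff_forall_notMem.1 h _ (sqrt_mem_levelSet hx)
  · intro h
    rw [Set.eq_empty_iff_forall_notMem]
    intro p hp
    rw [mem_levelSet] at hp
    nlinarith [h p.1, sq_nonneg p.2]

lemma nonpos_of_mem_levelSet {d : ℕ} {l : Fin d → ℝ} {p : ℝ × ℝ}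
    (hp : p ∈ levelSetBplus d l) : deformedPoly d l p.1 ≤ 0 := by
  rw [mem_levelSet] at hp
  nlinarith [sq_nonneg p.2]

/-! ### Section 3: sign lemmas near simple roots, level set component lemmas -/

lemma exists_neg_near {f : ℝ → ℝ} {f' c : ℝ} (hd : HasDerivAt f f' c) (hc : f c = 0)
    (h' : f' ≠ 0) {ε : ℝ} (hε : 0 < ε) : ∃ x, |x - c| < ε ∧ f x < 0 := by
  have hslope : Filter.Tendsto (slope f c) (nhdsWithin c {c}ᶜ) (nhds f') :=
    hasDerivAt_iff_tendsto_slope.1 hd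
  have hball : ∀ᶠ x in nhds c, |x - c| < ε := by
    filter_upwards [Metric.ball_mem_nhds c hε] with x hx
    rwa [Metric.mem_ball, Real.dist_eq] at hx
  have hslope_eq : ∀ x, x ≠ c → slope f c x = f x / (x - c) := by
    intro x hx
    rw [slope_def_field, hc, sub_zero]
  rcases lt_or_gt_of_ne h' with hneg | hpos
  · -- take x > c : slope < 0 there, x - c > 0 so f x < 0
    have hev : ∀ᶠ x in nhdsWithin c (Set.Ioi c), slope f c x < 0 :=
      (hslope.mono_left (nhdsWithin_mono c fun x (hx : x ∈ Set.Ioi c) => ne_of_gt hx))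
        (Iio_mem_nhds hneg)
    have hev2 : ∀ᶠ x in nhdsWithin c (Set.Ioi c), |x - c| < ε :=
      eventually_nhdsWithin_of_eventually_nhds hball
    have hev3 : ∀ᶠ x in nhdsWithin c (Set.Ioi c), x ∈ Set.Ioi c :=
      eventually_mem_nhdsWithin
    obtain ⟨x, h1, h2, h3⟩ := (hev.and (hev2.and hev3)).exists
    refine ⟨x, h2, ?_⟩
    have hxc : 0 < x - c := sub_pos.2 h3
    rw [hslope_eq x (ne_of_gt h3)] at h1
    rcases div_neg_iff.1 h1 with ⟨_, hb⟩ | ⟨ha, _⟩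
    · linarith
    · exact ha
  · -- take x < c : slope > 0 there, x - c < 0 so f x < 0
    have hev : ∀ᶠ x in nhdsWithin c (Set.Iio c), 0 < slope f c x :=
      (hslope.mono_left (nhdsWithin_mono c fun x (hx : x ∈ Set.Iio c) => ne_of_lt hx))
        (Ioi_mem_nhds hpos)
    have hev2 : ∀ᶠ x in nhdsWithin c (Set.Iio c), |x - c| < ε :=
      eventually_nhdsWithin_of_eventually_nhds hball
    have hev3 : ∀ᶠ x in nhdsWithin c (Set.Iio c), x ∈ Set.Iio c :=
      eventually_mem_nhdsWithin
    obtain ⟨x, h1, h2, h3⟩ := (hev.and (hev2.and hev3)).exists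
    refine ⟨x, h2, ?_⟩
    have hxc : x - c < 0 := sub_neg.2 h3
    rw [hslope_eq x (ne_of_lt h3)] at h1
    rcases div_pos_iff.1 h1 with ⟨_, hb⟩ | ⟨ha, _⟩
    · linarith
    · exact ha

lemma exists_pos_near {f : ℝ → ℝ} {f' c : ℝ} (hd : HasDerivAt f f' c) (hc : f c = 0)
    (h' : f' ≠ 0) {ε : ℝ} (hε : 0 < ε) : ∃ x, |x - c| < ε ∧ 0 < f x := by
  obtain ⟨x, hx1, hx2⟩ := exists_neg_near hd.neg (by simp [hc]) (neg_ne_zero.2 h') hε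
  exact ⟨x, hx1, by simpa using hx2⟩

lemma hasDerivAt_deformedPoly (d : ℕ) (l : Fin d → ℝ) (x : ℝ) :
    HasDerivAt (deformedPoly d l) ((toPoly d l).derivative.eval x) x := by
  rw [deformedPoly_eq]
  exact (toPoly d l).hasDerivAt x

/-- version for parameters off the discriminant: near any root there are negative values -/
lemma exists_neg_near_root {d : ℕ} {l : Fin d → ℝ} (hl : l ∉ realDiscrB d) {c : ℝ}
    (hc : deformedPoly d l c = 0) {ε : ℝ} (hε : 0 < ε) :
    ∃ x, |x - c| < ε ∧ deformedPoly d l x < 0 := by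
  have hd' : deriv (deformedPoly d l) c ≠ 0 := by
    intro h
    exact hl (Or.inr ⟨c, hc, h⟩)
  rw [deriv_deformedPoly] at hd'
  exact exists_neg_near (hasDerivAt_deformedPoly d l c) hc hd' hε

lemma exists_pos_near_root {d : ℕ} {l : Fin d → ℝ} (hl : l ∉ realDiscrB d) {c : ℝ}
    (hc : deformedPoly d l c = 0) {ε : ℝ} (hε : 0 < ε) :
    ∃ x, |x - c| < ε ∧ 0 < deformedPoly d l x := by
  have hd' : deriv (deformedPoly d l) c ≠ 0 := by
    intro h
    exact hl (Or.inr ⟨c, hc, h⟩)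
  rw [deriv_deformedPoly] at hd'
  exact exists_pos_near (hasDerivAt_deformedPoly d l c) hc hd' hε

/-! ### Section 4: components of the level set -/

lemma meets_zero_of_nonpos_between {d : ℕ} {l : Fin d → ℝ} {p : ℝ × ℝ}
    (hp : p ∈ levelSetBplus d l)
    (h : ∀ t ∈ Set.uIcc 0 p.1, deformedPoly d l t ≤ 0) :
    ∃ q ∈ connectedComponentIn (levelSetBplus d l) p, q.1 = 0 := by
  set s : ℝ := if 0 ≤ p.2 then 1 else -1 with hs
  have hs2 : s ^ 2 = 1 := by
    rw [hs]; split_ifs <;> norm_num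
  set g : ℝ → ℝ × ℝ := fun t => (t, s * Real.sqrt (-deformedPoly d l t)) with hg
  have hgc : Continuous g :=
    continuous_id.prodMk (continuous_const.mul
      (Real.continuous_sqrt.comp (continuous_deformedPoly d l).neg))
  set C : Set (ℝ × ℝ) := g '' Set.uIcc 0 p.1 with hC
  have hC1 : IsPreconnected C := isPreconnected_uIcc.image g hgc.continuousOn
  have hCV : C ⊆ levelSetBplus d l := by
    rintro _ ⟨t, ht, rfl⟩
    have hnn : 0 ≤ -deformedPoly d l t := neg_nonneg.2 (h t ht)
    rw [mem_levelSet]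
    simp only [hg, mul_pow, hs2, Real.sq_sqrt hnn]
    ring
  have hpC : p ∈ C := by
    refine ⟨p.1, Set.right_mem_uIcc, ?_⟩
    have h2 : p.2 ^ 2 = -deformedPoly d l p.1 := by
      rw [mem_levelSet] at hp; linarith
    have : Real.sqrt (-deformedPoly d l p.1) = |p.2| := by
      rw [← h2, Real.sqrt_sq_eq_abs]
    rw [hg]
    simp only [this]
    have : s * |p.2| = p.2 := by
      rw [hs]; rcases le_or_gt 0 p.2 with h|h
      · rw [if_pos h, one_mul, abs_of_nonneg h]
      · rw [if_neg (not_le.2 h), neg_one_mul, abs_of_neg h]; ring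
    rw [this]
  have hsub : C ⊆ connectedComponentIn (levelSetBplus d l) p :=
    hC1.subset_connectedComponentIn hpC hCV
  exact ⟨g 0, hsub ⟨0, Set.left_mem_uIcc, rfl⟩, rfl⟩

lemma avoids_zero_of_pos_between {d : ℕ} {l : Fin d → ℝ} {p : ℝ × ℝ}
    (hp : p ∈ levelSetBplus d l) {z : ℝ} (hz : 0 < deformedPoly d l z)
    (hzb : z ∈ Set.uIcc 0 p.1) :
    ∀ q ∈ connectedComponentIn (levelSetBplus d l) p, q.1 ≠ 0 := by
  intro q hq hq0
  set K := Prod.fst '' connectedComponentIn (levelSetBplus d l) p with hK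
  have hKpre : IsPreconnected K :=
    isPreconnected_connectedComponentIn.image _ continuous_fst.continuousOn
  have hKord : K.OrdConnected := hKpre.ordConnected
  have h0K : (0:ℝ) ∈ K := ⟨q, hq, hq0⟩
  have hpK : p.1 ∈ K := ⟨p, mem_connectedComponentIn hp, rfl⟩
  have hzK : z ∈ K := hKord.uIcc_subset h0K hpK hzb
  obtain ⟨r, hr, hrz⟩ := hzK
  have := nonpos_of_mem_levelSet (connectedComponentIn_subset _ _ hr)
  rw [hrz] at this
  linarith

/-! ### Section 5: pointwise lacuna condition and its characterization -/

/-- the "minus plus minus" pattern -/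
def Pat (d : ℕ) (l : Fin d → ℝ) : Prop :=
  ∃ x₁ z x₂ : ℝ, x₁ < z ∧ z < x₂ ∧ deformedPoly d l x₁ < 0 ∧
    0 < deformedPoly d l z ∧ deformedPoly d l x₂ < 0

/-- the pointwise lacuna condition -/
def Lc (d : ℕ) (l : Fin d → ℝ) : Prop :=
  levelSetBplus d l = ∅ ∨
    ∀ p ∈ levelSetBplus d l, ∃ q ∈ connectedComponentIn (levelSetBplus d l) p, q.1 = 0

lemma f0_ne_zero {d : ℕ} {l : Fin d → ℝ} (hl : l ∉ realDiscrB d) :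
    deformedPoly d l 0 ≠ 0 := fun h => hl (Or.inl h)

lemma key_iff {d : ℕ} {l : Fin d → ℝ} (hl : l ∉ realDiscrB d) :
    Lc d l ↔ ((∀ x, 0 < deformedPoly d l x) ∨
      (deformedPoly d l 0 < 0 ∧ ¬ Pat d l)) := by
  constructor
  · intro hLc
    by_cases hPos : ∀ x, 0 < deformedPoly d l x
    · exact Or.inl hPos
    right
    push_neg at hPos
    obtain ⟨x₀, hx₀⟩ := hPos
    have hVne : levelSetBplus d l ≠ ∅ := fun h => by
      have := levelSet_eq_empty_iff.1 h x₀; linarith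
    have hLc' : ∀ p ∈ levelSetBplus d l,
        ∃ q ∈ connectedComponentIn (levelSetBplus d l) p, q.1 = 0 :=
      hLc.resolve_left hVne
    have hf0 : deformedPoly d l 0 < 0 := by
      rcases lt_or_gt_of_ne (f0_ne_zero hl) with h | h
      · exact h
      · -- f 0 > 0 : the component through (x₀, ...) avoids {x = 0}, contradiction
        exfalso
        have hp := sqrt_mem_levelSet hx₀
        obtain ⟨q, hq, hq0⟩ := hLc' _ hp
        exact avoids_zero_of_pos_between hp h Set.left_mem_uIcc q hq hq0
    refine ⟨hf0, ?_⟩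
    rintro ⟨x₁, z, x₂, h1, h2, hn1, hpz, hn2⟩
    have hz0 : z ≠ 0 := fun h => by rw [h] at hpz; linarith
    rcases lt_or_gt_of_ne hz0 with hzneg | hzpos
    · -- z < 0 : use the point over x₁ (x₁ < z < 0)
      have hp := sqrt_mem_levelSet hn1.le
      obtain ⟨q, hq, hq0⟩ := hLc' _ hp
      refine avoids_zero_of_pos_between hp hpz ?_ q hq hq0
      rw [Set.mem_uIcc]
      right
      constructor <;> linarith
    · -- z > 0 : use the point over x₂
      have hp := sqrt_mem_levelSet hn2.le
      obtain ⟨q, hq, hq0⟩ := hLc' _ hp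
      refine avoids_zero_of_pos_between hp hpz ?_ q hq hq0
      rw [Set.mem_uIcc]
      left
      constructor <;> linarith
  · rintro (hPos | ⟨hf0, hnp⟩)
    · exact Or.inl (levelSet_eq_empty_iff.2 hPos)
    right
    intro p hp
    apply meets_zero_of_nonpos_between hp
    intro t ht
    by_contra hft
    push_neg at hft
    apply hnp
    have hfp : deformedPoly d l p.1 ≤ 0 := nonpos_of_mem_levelSet hp
    have ht0 : t ≠ 0 := fun h => by rw [h] at hft; linarith
    have htp : t ≠ p.1 := fun h => by rw [h] at hft; linarith
    -- obtain a strictly negative value near p.1, on the far side of t from 0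
    have hεpos : 0 < |p.1 - t| := abs_pos.2 (fun h => htp (sub_eq_zero.1 h).symm)
    obtain ⟨x₂', hx₂'d, hx₂'n⟩ : ∃ x, |x - p.1| < |p.1 - t| ∧ deformedPoly d l x < 0 := by
      rcases lt_or_eq_of_le hfp with h | h
      · exact ⟨p.1, by simpa using hεpos, h⟩
      · exact exists_neg_near_root hl h hεpos
    rw [Set.mem_uIcc] at ht
    rcases ht with ⟨ht1, ht2⟩ | ⟨ht1, ht2⟩
    · -- 0 ≤ t ≤ p.1, in fact 0 < t < p.1
      have h0t : 0 < t := lt_of_le_of_ne ht1 (Ne.symm ht0)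
      have htp1 : t < p.1 := lt_of_le_of_ne ht2 htp
      have : t < x₂' := by
        rw [abs_of_pos (by linarith : 0 < p.1 - t)] at hx₂'d
        have := abs_lt.1 hx₂'d
        linarith [this.1]
      exact ⟨0, t, x₂', h0t, this, hf0, hft, hx₂'n⟩
    · -- p.1 ≤ t ≤ 0, in fact p.1 < t < 0
      have h0t : t < 0 := lt_of_le_of_ne ht2 ht0
      have htp1 : p.1 < t := lt_of_le_of_ne ht1 (Ne.symm htp)
      have : x₂' < t := by
        rw [abs_of_neg (by linarith : p.1 - t < 0)] at hx₂'d
        have := abs_lt.1 hx₂'d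
        linarith [this.2]
      exact ⟨x₂', t, 0, this, h0t, hx₂'n, hft, hf0⟩

/-! ### Section 6: openness -/

lemma continuous_evalAt (d : ℕ) (x : ℝ) :
    Continuous (fun l : Fin d → ℝ => deformedPoly d l x) := by
  unfold deformedPoly
  exact continuous_const.add
    (continuous_finset_sum _ fun i _ => (continuous_apply i).mul continuous_const)

lemma isOpen_neg_somewhere (d : ℕ) :
    IsOpen {l : Fin d → ℝ | ∃ x, deformedPoly d l x < 0} := by
  have : {l : Fin d → ℝ | ∃ x, deformedPoly d l x < 0}
      = ⋃ x : ℝ, (fun l => deformedPoly d l x) ⁻¹' Set.Iio 0 := by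
    ext l; simp [Set.mem_iUnion]
  rw [this]
  exact isOpen_iUnion fun x => (continuous_evalAt d x).isOpen_preimage _ isOpen_Iio

lemma isOpen_pat (d : ℕ) : IsOpen {l : Fin d → ℝ | Pat d l} := by
  have : {l : Fin d → ℝ | Pat d l} = ⋃ x₁ : ℝ, ⋃ z : ℝ, ⋃ x₂ : ℝ,
      {l : Fin d → ℝ | x₁ < z ∧ z < x₂ ∧ deformedPoly d l x₁ < 0 ∧
        0 < deformedPoly d l z ∧ deformedPoly d l x₂ < 0} := by
    ext l; simp [Pat, Set.mem_iUnion]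
  rw [this]
  refine isOpen_iUnion fun x₁ => isOpen_iUnion fun z => isOpen_iUnion fun x₂ => ?_
  by_cases h : x₁ < z ∧ z < x₂
  · have heq : {l : Fin d → ℝ | x₁ < z ∧ z < x₂ ∧ deformedPoly d l x₁ < 0 ∧
        0 < deformedPoly d l z ∧ deformedPoly d l x₂ < 0}
        = ((fun l => deformedPoly d l x₁) ⁻¹' Set.Iio 0) ∩
          (((fun l => deformedPoly d l z) ⁻¹' Set.Ioi 0) ∩
           ((fun l => deformedPoly d l x₂) ⁻¹' Set.Iio 0)) := by
      ext l; simp [h.1, h.2, and_assoc]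
    rw [heq]
    exact ((continuous_evalAt d x₁).isOpen_preimage _ isOpen_Iio).inter
      (((continuous_evalAt d z).isOpen_preimage _ isOpen_Ioi).inter
        ((continuous_evalAt d x₂).isOpen_preimage _ isOpen_Iio))
  · have heq : {l : Fin d → ℝ | x₁ < z ∧ z < x₂ ∧ deformedPoly d l x₁ < 0 ∧
        0 < deformedPoly d l z ∧ deformedPoly d l x₂ < 0} = ∅ := by
      ext l; simp only [Set.mem_setOf_eq, Set.mem_empty_iff_false, iff_false]
      intro hc; exact h ⟨hc.1, hc.2.1⟩
    rw [heq]
    exact isOpen_empty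

lemma isOpen_f0_pos (d : ℕ) : IsOpen {l : Fin d → ℝ | 0 < deformedPoly d l 0} :=
  (continuous_evalAt d 0).isOpen_preimage _ isOpen_Ioi

lemma isOpen_f0_neg (d : ℕ) : IsOpen {l : Fin d → ℝ | deformedPoly d l 0 < 0} :=
  (continuous_evalAt d 0).isOpen_preimage _ isOpen_Iio

/-- Openness of the set of everywhere-positive parameters (needs `d` even and positive). -/
lemma isOpen_Spos {d : ℕ} (he : Even d) (hd : 0 < d) : IsOpen (Spos d) := by
  rw [Metric.isOpen_iff]
  intro l hl
  -- uniform bound for all parameters within distance 1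
  set M : ℝ := (∑ i, |l i|) + d * 1 + 1 with hM
  have hM1 : 1 ≤ M := by
    have : 0 ≤ ∑ i, |l i| := Finset.sum_nonneg fun i _ => abs_nonneg _
    have : (0:ℝ) ≤ d := Nat.cast_nonneg d
    simp only [hM]; linarith
  have hMpos : (0:ℝ) < M := by linarith
  -- minimum of f_l on [-M, M]
  have hcomp : IsCompact (Set.Icc (-M) M) := isCompact_Icc
  have hne : (Set.Icc (-M) M).Nonempty := ⟨0, by constructor <;> linarith⟩
  obtain ⟨x₀, hx₀mem, hx₀min⟩ := hcomp.exists_isMinOn hne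
    (continuous_deformedPoly d l).continuousOn
  set m : ℝ := deformedPoly d l x₀ with hm
  have hmpos : 0 < m := hl x₀
  set B : ℝ := (d + 1) * M ^ d + 1 with hB
  have hBpos : 0 < B := by positivity
  refine ⟨min 1 (m / (2 * B)), by positivity, ?_⟩
  intro l' hl'
  have hdist : ∀ i, |l' i - l i| < min 1 (m / (2 * B)) := by
    intro i
    calc |l' i - l i| = dist (l' i) (l i) := (Real.dist_eq _ _).symm
    _ ≤ dist l' l := dist_le_pi_dist l' l i
    _ < _ := hl'
  intro x
  -- case |x| large
  rcases le_or_gt (M) |x| with hx | hx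
  · apply deformedPoly_pos_of_abs_ge he hd
    refine le_trans ?_ hx
    have : ∀ i, |l' i| ≤ |l i| + 1 := by
      intro i
      have h1 := hdist i
      have h2 : |l' i - l i| < 1 := lt_of_lt_of_le h1 (min_le_left _ _)
      calc |l' i| = |l i + (l' i - l i)| := by ring_nf
      _ ≤ |l i| + |l' i - l i| := abs_add_le _ _
      _ ≤ |l i| + 1 := by linarith
    calc (∑ i, |l' i|) + 1 ≤ (∑ i, (|l i| + 1)) + 1 :=
          add_le_add_left (Finset.sum_le_sum fun i _ => this i) 1
    _ = (∑ i, |l i|) + d * 1 + 1 := by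
          rw [Finset.sum_add_distrib]
          simp [Finset.card_univ]
    _ = M := hM.symm
  · -- case |x| ≤ M : compare with f_l x ≥ m
    have hxM : x ∈ Set.Icc (-M) M := by
      rw [Set.mem_Icc]
      have := abs_lt.1 hx
      constructor <;> linarith [this.1, this.2]
    have hflx : m ≤ deformedPoly d l x := hx₀min hxM
    have hdiff : |deformedPoly d l' x - deformedPoly d l x| ≤ m / 2 := by
      have : deformedPoly d l' x - deformedPoly d l x = ∑ i, (l' i - l i) * x ^ (i:ℕ) := by
        have hsum : ∑ i, (l' i - l i) * x ^ (i:ℕ)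
            = (∑ i, l' i * x ^ (i:ℕ)) - ∑ i, l i * x ^ (i:ℕ) := by
          rw [← Finset.sum_sub_distrib]
          exact Finset.sum_congr rfl fun i _ => sub_mul _ _ _
        unfold deformedPoly
        rw [hsum]
        ring
      rw [this]
      have hxpow : ∀ i : Fin d, |x| ^ (i:ℕ) ≤ M ^ d := by
        intro i
        calc |x| ^ (i:ℕ) ≤ M ^ (i:ℕ) := pow_le_pow_left₀ (abs_nonneg x) hx.le _
        _ ≤ M ^ d := pow_le_pow_right₀ hM1 i.isLt.le
      calc |∑ i, (l' i - l i) * x ^ (i:ℕ)| ≤ ∑ i, |(l' i - l i) * x ^ (i:ℕ)| :=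
            Finset.abs_sum_le_sum_abs _ _
      _ = ∑ i, |l' i - l i| * |x| ^ (i:ℕ) := by simp [abs_mul, abs_pow]
      _ ≤ ∑ i : Fin d, (m / (2 * B)) * M ^ d := by
            apply Finset.sum_le_sum
            intro i _
            apply mul_le_mul (le_of_lt (lt_of_lt_of_le (hdist i) (min_le_right _ _)))
              (hxpow i) (by positivity) (by positivity)
      _ = d * ((m / (2 * B)) * M ^ d) := by simp [Finset.card_univ]
      _ ≤ m / 2 := by
            rw [div_mul_eq_mul_div, mul_div_assoc']
            rw [div_le_div_iff₀ (by positivity) (by norm_num)]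
            have h1 : (d:ℝ) * M ^ d ≤ B := by
              have : (0:ℝ) < M ^ d := by positivity
              simp only [hB]; nlinarith
            nlinarith [hmpos]
    have := abs_le.1 hdiff
    linarith [this.1]

/-! ### Section 7: the second lacuna component -/

/-- parametrization of polynomials of the form `(x-a)(x-b)Q(x)` -/
noncomputable def Phi (d : ℕ) : ℝ × ℝ × (Fin (d-2) → ℝ) → (Fin d → ℝ) := fun w i =>
  ((X - C w.1) * (X - C w.2.1) * toPoly (d-2) w.2.2).coeff i

lemma quad_monic (a b : ℝ) : ((X - C a) * (X - C b) : Polynomial ℝ).Monic :=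
  (monic_X_sub_C a).mul (monic_X_sub_C b)

lemma prod_monic (d : ℕ) (a b : ℝ) (q : Fin (d-2) → ℝ) :
    ((X - C a) * (X - C b) * toPoly (d-2) q).Monic :=
  (quad_monic a b).mul (toPoly_monic _ q)

lemma prod_natDegree (d : ℕ) (hd : 2 ≤ d) (a b : ℝ) (q : Fin (d-2) → ℝ) :
    ((X - C a) * (X - C b) * toPoly (d-2) q).natDegree = d := by
  rw [(quad_monic a b).natDegree_mul (toPoly_monic _ q),
    (monic_X_sub_C a).natDegree_mul (monic_X_sub_C b),
    natDegree_X_sub_C, natDegree_X_sub_C, toPoly_natDegree]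
  omega

lemma toPoly_Phi (d : ℕ) (hd : 2 ≤ d) (w : ℝ × ℝ × (Fin (d-2) → ℝ)) :
    toPoly d (Phi d w) = (X - C w.1) * (X - C w.2.1) * toPoly (d-2) w.2.2 :=
  toPoly_of_monic (prod_monic d w.1 w.2.1 w.2.2) (prod_natDegree d hd w.1 w.2.1 w.2.2)

lemma eval_Phi (d : ℕ) (hd : 2 ≤ d) (w : ℝ × ℝ × (Fin (d-2) → ℝ)) (x : ℝ) :
    deformedPoly d (Phi d w) x
      = (x - w.1) * (x - w.2.1) * deformedPoly (d-2) w.2.2 x := by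
  rw [← eval_toPoly, toPoly_Phi d hd]
  simp [eval_mul, eval_sub, eval_toPoly]

lemma quad_expand (a b : ℝ) :
    ((X - C a) * (X - C b) : Polynomial ℝ) = C (a*b) + C (-(a+b)) * X ^ 1 + X ^ 2 := by
  rw [C_mul, C_neg, C_add]
  ring

lemma quad_coeff (a b : ℝ) (n : ℕ) :
    ((X - C a) * (X - C b) : Polynomial ℝ).coeff n
      = (if n = 0 then a * b else 0) + (if n = 1 then -(a+b) else 0)
        + (if n = 2 then 1 else 0) := by
  rw [quad_expand]
  simp only [coeff_add, coeff_C, coeff_C_mul, coeff_X_pow]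
  split_ifs <;> ring

lemma continuous_Phi (d : ℕ) : Continuous (Phi d) := by
  apply continuous_pi
  intro i
  have heq : (fun w : ℝ × ℝ × (Fin (d-2) → ℝ) => Phi d w i)
      = fun w => ∑ x ∈ Finset.HasAntidiagonal.antidiagonal (i:ℕ),
          (((X - C w.1) * (X - C w.2.1) : Polynomial ℝ).coeff x.1)
            * ((toPoly (d-2) w.2.2).coeff x.2) := by
    funext w
    rw [Phi, coeff_mul]
  rw [heq]
  apply continuous_finset_sum
  rintro ⟨j, k⟩ _
  apply Continuous.mul
  · simp only [quad_coeff]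
    apply Continuous.add
    apply Continuous.add
    · split_ifs
      · exact continuous_fst.mul (continuous_fst.comp continuous_snd)
      · exact continuous_const
    · split_ifs
      · exact ((continuous_fst.add (continuous_fst.comp continuous_snd))).neg
      · exact continuous_const
    · exact continuous_const
  · simp only [coeff_toPoly]
    apply Continuous.add
    · exact continuous_const
    · by_cases hk : k < d - 2
      · simp only [dif_pos hk]
        exact (continuous_apply (⟨k, hk⟩ : Fin (d-2))).comp
          (continuous_snd.comp continuous_snd)
      · simp only [dif_neg hk]
        exact continuous_const

/-- the parameter domain -/
def Dset (d : ℕ) : Set (ℝ × ℝ × (Fin (d-2) → ℝ)) :=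
  Set.Iio 0 ×ˢ (Set.Ioi 0 ×ˢ Spos (d-2))

lemma convex_Dset (d : ℕ) : Convex ℝ (Dset d) :=
  (convex_Iio 0).prod ((convex_Ioi 0).prod (convex_Spos (d-2)))

lemma mem_Dset {d : ℕ} {w : ℝ × ℝ × (Fin (d-2) → ℝ)} :
    w ∈ Dset d ↔ w.1 < 0 ∧ 0 < w.2.1 ∧ ∀ x, 0 < deformedPoly (d-2) w.2.2 x := by
  simp [Dset, Set.mem_prod, Spos]

/-- ambient predicate cutting out the second lacuna component -/
def Tpred (d : ℕ) (l : Fin d → ℝ) : Prop :=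
  l ∉ realDiscrB d ∧ deformedPoly d l 0 < 0 ∧ ¬ Pat d l

lemma phi_mem_Tpred (d : ℕ) (hd : 2 ≤ d) {w : ℝ × ℝ × (Fin (d-2) → ℝ)}
    (hw : w ∈ Dset d) : Tpred d (Phi d w) := by
  obtain ⟨ha, hb, hQ⟩ := mem_Dset.1 hw
  obtain ⟨a, b, q⟩ := w
  simp only at ha hb hQ
  have heval : ∀ x, deformedPoly d (Phi d (a,b,q)) x
      = (x - a) * (x - b) * deformedPoly (d-2) q x := eval_Phi d hd (a,b,q)
  have hab : a < b := lt_trans ha hb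
  set f := deformedPoly d (Phi d (a,b,q)) with hf
  set g := deformedPoly (d-2) q with hg
  have hroots : ∀ x, f x = 0 → x = a ∨ x = b := by
    intro x hx
    rw [heval x] at hx
    rcases mul_eq_zero.1 hx with h | h
    · rcases mul_eq_zero.1 h with h' | h'
      · left; linarith [sub_eq_zero.1 h']
      · right; linarith [sub_eq_zero.1 h']
    · exact absurd h (ne_of_gt (hQ x))
  have hderiv : ∀ x, HasDerivAt f
      ((1 * (x - b) + (x - a) * 1) * g x
        + (x - a) * (x - b) * ((toPoly (d-2) q).derivative.eval x)) x := by
    intro x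
    have h1 : HasDerivAt (fun y : ℝ => y - a) 1 x := (hasDerivAt_id x).sub_const a
    have h2 : HasDerivAt (fun y : ℝ => y - b) 1 x := (hasDerivAt_id x).sub_const b
    have hgx : HasDerivAt g ((toPoly (d-2) q).derivative.eval x) x :=
      hasDerivAt_deformedPoly _ q x
    have h12 : HasDerivAt (fun y : ℝ => (y - a) * (y - b))
        (1 * (x - b) + (x - a) * 1) x := h1.mul h2
    have hfin := h12.mul hgx
    have hfeq : f = fun y => ((y - a) * (y - b)) * g y := funext heval
    rw [hfeq]
    exact hfin
  have hf0 : f 0 < 0 := by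
    rw [heval 0, mul_assoc]
    exact mul_neg_of_pos_of_neg (by linarith) (mul_neg_of_neg_of_pos (by linarith) (hQ 0))
  refine ⟨?_, hf0, ?_⟩
  · -- not in the discriminant
    rintro (h0 | ⟨x, hx, hx'⟩)
    · exact hf0.ne h0
    · have hdx := (hderiv x).deriv
      rcases hroots x hx with rfl | rfl
      · rw [hdx] at hx'
        have : (1 * (x - b) + (x - x) * 1) * g x
            + (x - x) * (x - b) * ((toPoly (d-2) q).derivative.eval x)
            = (x - b) * g x := by ring
        rw [this] at hx'
        exact (mul_ne_zero (sub_ne_zero.2 (ne_of_lt hab)) (ne_of_gt (hQ x))) hx'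
      · rw [hdx] at hx'
        have : (1 * (x - x) + (x - a) * 1) * g x
            + (x - a) * (x - x) * ((toPoly (d-2) q).derivative.eval x)
            = (x - a) * g x := by ring
        rw [this] at hx'
        exact (mul_ne_zero (sub_ne_zero.2 (ne_of_gt hab)) (ne_of_gt (hQ x))) hx'
  · -- no pattern
    rintro ⟨x₁, z, x₂, h1, h2, hn1, hpz, hn2⟩
    have hin : ∀ x, f x < 0 → a < x ∧ x < b := by
      intro x hx
      rw [heval x] at hx
      constructor
      · by_contra hc
        push_neg at hc
        have h1 := mul_nonneg (neg_nonneg.2 (by linarith : x - a ≤ 0))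
          (neg_nonneg.2 (by linarith : x - b ≤ 0))
        rw [neg_mul_neg] at h1
        nlinarith [hQ x]
      · by_contra hc
        push_neg at hc
        have h1 := mul_nonneg (by linarith : (0:ℝ) ≤ x - a) (by linarith : (0:ℝ) ≤ x - b)
        nlinarith [hQ x]
    obtain ⟨ha1, hb1⟩ := hin x₁ hn1
    obtain ⟨ha2, hb2⟩ := hin x₂ hn2
    have hza : (0:ℝ) < z - a := by linarith
    have hzb : z - b < 0 := by linarith
    have : f z < 0 := by
      rw [heval z, mul_assoc]
      exact mul_neg_of_pos_of_neg hza (mul_neg_of_neg_of_pos hzb (hQ z))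
    linarith

lemma tpred_factor {d : ℕ} (hd : 2 ≤ d) (he : Even d) {l : Fin d → ℝ}
    (hT : Tpred d l) : ∃ w ∈ Dset d, Phi d w = l := by
  obtain ⟨hl, hf0, hnp⟩ := hT
  set f := deformedPoly d l with hfdef
  have hfc : Continuous f := continuous_deformedPoly d l
  set A : Set ℝ := {x | f x ≤ 0} with hA
  have hA0 : (0:ℝ) ∈ A := le_of_lt hf0
  have hAcl : IsClosed A := isClosed_le hfc continuous_const
  have hAbd : ∀ x ∈ A, |x| ≤ (∑ i, |l i|) + 1 := by
    intro x hx
    by_contra hc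
    push_neg at hc
    have := deformedPoly_pos_of_abs_ge he (by omega : 0 < d) l hc.le
    have hx' : f x ≤ 0 := hx
    linarith
  have hbddb : BddBelow A := ⟨-((∑ i, |l i|) + 1), fun x hx => by
    linarith [(abs_le.1 (hAbd x hx)).1]⟩
  have hbdda : BddAbove A := ⟨(∑ i, |l i|) + 1, fun x hx => by
    linarith [(abs_le.1 (hAbd x hx)).2]⟩
  set a := sInf A with ha
  set b := sSup A with hb
  have haA : a ∈ A := hAcl.csInf_mem ⟨0, hA0⟩ hbddb
  have hbA : b ∈ A := hAcl.csSup_mem ⟨0, hA0⟩ hbdda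
  have ha_le : a ≤ 0 := csInf_le hbddb hA0
  have hb_ge : (0:ℝ) ≤ b := le_csSup hbdda hA0
  have hfa : f a = 0 := by
    rcases lt_or_eq_of_le (show f a ≤ 0 from haA) with hlt | heq
    · exfalso
      have hev : ∀ᶠ x in nhds a, f x < 0 := (hfc.tendsto a) (Iio_mem_nhds hlt)
      have hev' : ∀ᶠ x in nhdsWithin a (Set.Iio a), f x < 0 :=
        eventually_nhdsWithin_of_eventually_nhds hev
      have hev'' : ∀ᶠ x in nhdsWithin a (Set.Iio a), x ∈ Set.Iio a :=
        eventually_mem_nhdsWithin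
      obtain ⟨x, h1, h2⟩ := (hev'.and hev'').exists
      have : a ≤ x := csInf_le hbddb h1.le
      exact absurd h2 (not_lt.2 this)
    · exact heq
  have hfb : f b = 0 := by
    rcases lt_or_eq_of_le (show f b ≤ 0 from hbA) with hlt | heq
    · exfalso
      have hev : ∀ᶠ x in nhds b, f x < 0 := (hfc.tendsto b) (Iio_mem_nhds hlt)
      have hev' : ∀ᶠ x in nhdsWithin b (Set.Ioi b), f x < 0 :=
        eventually_nhdsWithin_of_eventually_nhds hev
      have hev'' : ∀ᶠ x in nhdsWithin b (Set.Ioi b), x ∈ Set.Ioi b :=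
        eventually_mem_nhdsWithin
      obtain ⟨x, h1, h2⟩ := (hev'.and hev'').exists
      have : x ≤ b := le_csSup hbdda h1.le
      exact absurd h2 (not_lt.2 this)
    · exact heq
  have ha0 : a < 0 := lt_of_le_of_ne ha_le (fun h => hf0.ne (h ▸ hfa))
  have hb0 : (0:ℝ) < b := lt_of_le_of_ne hb_ge (fun h => hf0.ne (by rw [← h] at hfb; exact hfb))
  have hout : ∀ x, (x < a ∨ b < x) → 0 < f x := by
    intro x hx
    by_contra hc
    push_neg at hc
    have hxA : x ∈ A := hc
    rcases hx with h | h
    · exact absurd (csInf_le hbddb hxA) (not_le.2 h)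
    · exact absurd (le_csSup hbdda hxA) (not_le.2 h)
  have hSC : ∀ z, a < z → z < b → z ≠ 0 → ¬ (0 < f z) := by
    intro z hza hzb hz0 hfz
    rcases lt_or_gt_of_ne hz0 with hzn | hzp
    · obtain ⟨x₁, hx₁d, hx₁n⟩ := exists_neg_near_root hl hfa (by linarith : (0:ℝ) < z - a)
      apply hnp
      refine ⟨x₁, z, 0, ?_, hzn, hx₁n, hfz, hf0⟩
      have := abs_lt.1 hx₁d; linarith [this.2]
    · obtain ⟨x₂, hx₂d, hx₂n⟩ := exists_neg_near_root hl hfb (by linarith : (0:ℝ) < b - z)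
      apply hnp
      refine ⟨0, z, x₂, hzp, ?_, hf0, hfz, hx₂n⟩
      have := abs_lt.1 hx₂d; linarith [this.1]
  have hint : ∀ x, a < x → x < b → f x < 0 := by
    intro x hxa hxb
    rcases lt_trichotomy (f x) 0 with h | h | h
    · exact h
    · exfalso
      have hx0 : x ≠ 0 := fun hh => hf0.ne (hh ▸ h)
      have hεpos : 0 < min |x| (min (x - a) (b - x)) :=
        lt_min (abs_pos.2 hx0) (lt_min (by linarith) (by linarith))
      obtain ⟨z, hzd, hzp⟩ := exists_pos_near_root hl h hεpos
      have hz0 : z ≠ 0 := by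
        intro hh
        have := lt_of_lt_of_le hzd (min_le_left _ _)
        rw [hh, zero_sub, abs_neg] at this
        exact lt_irrefl _ this
      have h2 := abs_lt.1 (lt_of_lt_of_le hzd (le_trans (min_le_right _ _) (min_le_left _ _)))
      have h3 := abs_lt.1 (lt_of_lt_of_le hzd (le_trans (min_le_right _ _) (min_le_right _ _)))
      exact hSC z (by linarith [h2.1]) (by linarith [h3.2]) hz0 hzp
    · have hx0 : x ≠ 0 := fun hh => by rw [hh] at h; linarith
      exact absurd h (hSC x hxa hxb hx0)
  -- factor the polynomial
  set p := toPoly d l with hp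
  have hpeval : ∀ x, p.eval x = f x := fun x => eval_toPoly d l x
  have hpa : p.IsRoot a := by rw [IsRoot, hpeval]; exact hfa
  obtain ⟨p₁, hp₁⟩ := dvd_iff_isRoot.2 hpa
  have hp₁b : p₁.eval b = 0 := by
    have hh := hpeval b
    rw [hp₁] at hh
    simp only [eval_mul, eval_sub, eval_X, eval_C] at hh
    rw [hfb] at hh
    rcases mul_eq_zero.1 hh with h | h
    · exfalso; have := sub_eq_zero.1 h; linarith
    · exact h
  obtain ⟨Q, hQ⟩ := dvd_iff_isRoot.2 (show p₁.IsRoot b from hp₁b)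
  have hfact : p = (X - C a) * (X - C b) * Q := by rw [hp₁, hQ, mul_assoc]
  have hpm : p.Monic := toPoly_monic d l
  have hQm : Q.Monic := by
    rw [hfact] at hpm
    exact (quad_monic a b).of_mul_monic_left hpm
  have hdeg : Q.natDegree = d - 2 := by
    have h1 : p.natDegree = d := toPoly_natDegree d l
    rw [hfact, (quad_monic a b).natDegree_mul hQm,
      (monic_X_sub_C a).natDegree_mul (monic_X_sub_C b),
      natDegree_X_sub_C, natDegree_X_sub_C] at h1
    omega
  have hevalQ : ∀ x, f x = (x - a) * (x - b) * Q.eval x := by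
    intro x
    rw [← hpeval, hfact]
    simp [eval_mul]
  have hda : deriv f a ≠ 0 := fun h => hl (Or.inr ⟨a, hfa, h⟩)
  have hdb : deriv f b ≠ 0 := fun h => hl (Or.inr ⟨b, hfb, h⟩)
  have hder : ∀ x, deriv f x = ((x - b) + (x - a)) * Q.eval x
      + (x - a) * (x - b) * Q.derivative.eval x := by
    intro x
    rw [hfdef, deriv_deformedPoly, ← hp, hfact, derivative_mul, derivative_mul,
      derivative_X_sub_C]
    simp only [eval_add, eval_mul, eval_sub, eval_X, eval_C, eval_one, derivative_X_sub_C]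
    ring
  have hQa : Q.eval a ≠ 0 := by
    intro h
    apply hda
    rw [hder a, h]
    ring
  have hQb : Q.eval b ≠ 0 := by
    intro h
    apply hdb
    rw [hder b, h]
    ring
  have hQnr : ∀ x, Q.eval x ≠ 0 := by
    intro x h
    have hfx : f x = 0 := by rw [hevalQ x, h]; ring
    have hxA : x ∈ A := le_of_eq hfx
    have hax : a ≤ x := csInf_le hbddb hxA
    have hxb : x ≤ b := le_csSup hbdda hxA
    rcases lt_or_eq_of_le hax with h1 | h1
    · rcases lt_or_eq_of_le hxb with h2 | h2
      · exact absurd hfx (ne_of_lt (hint x h1 h2))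
      · exact hQb (h2 ▸ h)
    · exact hQa (h1 ▸ h)
  have hQb1 : 0 < Q.eval (b + 1) := by
    have h1 : 0 < f (b+1) := hout _ (Or.inr (by linarith))
    rw [hevalQ (b+1)] at h1
    nlinarith
  have hQpos : ∀ x, 0 < Q.eval x := by
    intro x
    rcases lt_trichotomy (Q.eval x) 0 with h | h | h
    · exfalso
      obtain ⟨c, hc1, hc2⟩ := intermediate_value_uIcc
        (a := x) (b := b+1) (f := fun y => Q.eval y) Q.continuous.continuousOn
        (Set.mem_uIcc.2 (Or.inl ⟨h.le, hQb1.le⟩))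
      exact hQnr c hc2
    · exact absurd h (hQnr x)
    · exact h
  have hQ' : toPoly (d-2) (fun i => Q.coeff i) = Q := toPoly_of_monic hQm hdeg
  refine ⟨(a, b, fun i => Q.coeff i), ?_, ?_⟩
  · rw [mem_Dset]
    refine ⟨ha0, hb0, ?_⟩
    intro x
    show 0 < deformedPoly (d-2) (fun i => Q.coeff i) x
    rw [← eval_toPoly, hQ']
    exact hQpos x
  · funext i
    show ((X - C a) * (X - C b) * toPoly (d-2) fun i => Q.coeff i).coeff i = l i
    rw [hQ', ← hfact, hp, coeff_toPoly, if_neg (Nat.ne_of_lt i.isLt), dif_pos i.isLt,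
      zero_add]


/-! ### helper bounds for `tpred_nbhd` -/

lemma deformedPoly_sub (d : ℕ) (lam l : Fin d → ℝ) (x : ℝ) :
    deformedPoly d lam x - deformedPoly d l x = ∑ i, (lam i - l i) * x ^ (i:ℕ) := by
  have hsum : ∑ i, (lam i - l i) * x ^ (i:ℕ)
      = (∑ i, lam i * x ^ (i:ℕ)) - ∑ i, l i * x ^ (i:ℕ) := by
    rw [← Finset.sum_sub_distrib]
    exact Finset.sum_congr rfl fun i _ => sub_mul _ _ _
  unfold deformedPoly
  rw [hsum]
  ring

lemma deformedPoly_diff_bound (d : ℕ) (lam l : Fin d → ℝ) {x M : ℝ} (hM : 1 ≤ M)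
    (hx : |x| ≤ M) :
    |deformedPoly d lam x - deformedPoly d l x| ≤ (∑ i, |lam i - l i|) * M ^ d := by
  rw [deformedPoly_sub]
  calc |∑ i, (lam i - l i) * x ^ (i:ℕ)| ≤ ∑ i, |(lam i - l i) * x ^ (i:ℕ)| :=
        Finset.abs_sum_le_sum_abs _ _
  _ = ∑ i, |lam i - l i| * |x| ^ (i:ℕ) := by simp [abs_mul, abs_pow]
  _ ≤ ∑ i, |lam i - l i| * M ^ d := by
      apply Finset.sum_le_sum
      intro i _
      apply mul_le_mul_of_nonneg_left _ (abs_nonneg _)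
      calc |x| ^ (i:ℕ) ≤ M ^ (i:ℕ) := pow_le_pow_left₀ (abs_nonneg x) hx _
      _ ≤ M ^ d := pow_le_pow_right₀ hM i.isLt.le
  _ = (∑ i, |lam i - l i|) * M ^ d := (Finset.sum_mul _ _ _).symm

lemma deriv_sub_eval (d : ℕ) (lam l : Fin d → ℝ) (x : ℝ) :
    deriv (deformedPoly d lam) x - deriv (deformedPoly d l) x
      = ∑ i, (lam i - l i) * ((i:ℕ):ℝ) * x ^ ((i:ℕ) - 1) := by
  rw [deriv_deformedPoly, deriv_deformedPoly]
  have hdiff : toPoly d lam - toPoly d l = ∑ i, C (lam i - l i) * X ^ (i:ℕ) := by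
    have hsum : ∑ i : Fin d, C (lam i - l i) * (X:Polynomial ℝ) ^ (i:ℕ)
        = (∑ i : Fin d, C (lam i) * (X:Polynomial ℝ) ^ (i:ℕ))
          - ∑ i : Fin d, C (l i) * (X:Polynomial ℝ) ^ (i:ℕ) := by
      rw [← Finset.sum_sub_distrib]
      apply Finset.sum_congr rfl
      intro i _
      rw [C_sub]
      ring
    rw [toPoly, toPoly, hsum]
    ring
  have h2 : (toPoly d lam).derivative - (toPoly d l).derivative
      = ∑ i, C ((lam i - l i) * ((i:ℕ):ℝ)) * X ^ ((i:ℕ) - 1) := by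
    rw [← derivative_sub, hdiff, derivative_sum]
    exact Finset.sum_congr rfl fun i _ => derivative_C_mul_X_pow _ _
  have h3 := congrArg (fun r => eval x r) h2
  simp only [eval_sub, eval_finset_sum, eval_mul, eval_C, eval_pow, eval_X] at h3
  rw [h3]

lemma deriv_diff_bound (d : ℕ) (lam l : Fin d → ℝ) {x M : ℝ} (hM : 1 ≤ M)
    (hx : |x| ≤ M) :
    |deriv (deformedPoly d lam) x - deriv (deformedPoly d l) x|
      ≤ (∑ i, |lam i - l i|) * (d * M ^ d) := by
  rw [deriv_sub_eval]
  have hd0 : (0:ℝ) ≤ d := Nat.cast_nonneg d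
  calc |∑ i, (lam i - l i) * ((i:ℕ):ℝ) * x ^ ((i:ℕ) - 1)|
      ≤ ∑ i, |(lam i - l i) * ((i:ℕ):ℝ) * x ^ ((i:ℕ) - 1)| := Finset.abs_sum_le_sum_abs _ _
  _ = ∑ i, |lam i - l i| * (((i:ℕ):ℝ) * |x| ^ ((i:ℕ) - 1)) := by
      apply Finset.sum_congr rfl
      intro i _
      rw [abs_mul, abs_mul, abs_pow, mul_assoc]
      congr 2
      exact abs_of_nonneg (Nat.cast_nonneg _)
  _ ≤ ∑ i, |lam i - l i| * (d * M ^ d) := by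
      apply Finset.sum_le_sum
      intro i _
      apply mul_le_mul_of_nonneg_left _ (abs_nonneg _)
      apply mul_le_mul
      · exact_mod_cast Nat.cast_le.2 i.isLt.le
      · calc |x| ^ ((i:ℕ) - 1) ≤ M ^ ((i:ℕ) - 1) := pow_le_pow_left₀ (abs_nonneg x) hx _
        _ ≤ M ^ d := pow_le_pow_right₀ hM (by omega)
      · positivity
      · exact hd0
  _ = (∑ i, |lam i - l i|) * (d * M ^ d) := (Finset.sum_mul _ _ _).symm

lemma sum_abs_sub_le (d : ℕ) (lam l : Fin d → ℝ) :
    (∑ i, |lam i - l i|) ≤ d * dist lam l := by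
  calc (∑ i, |lam i - l i|) ≤ ∑ _i : Fin d, dist lam l := by
        apply Finset.sum_le_sum
        intro i _
        rw [← Real.dist_eq]
        exact dist_le_pi_dist lam l i
  _ = d * dist lam l := by simp [Finset.card_univ]

/-! ### Section 8: assembly -/

lemma phi_hasDerivAt (d : ℕ) (hd : 2 ≤ d) (a b : ℝ) (q : Fin (d-2) → ℝ) (x : ℝ) :
    HasDerivAt (deformedPoly d (Phi d (a,b,q)))
      ((1 * (x - b) + (x - a) * 1) * deformedPoly (d-2) q x
        + (x - a) * (x - b) * ((toPoly (d-2) q).derivative.eval x)) x := by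
  have h1 : HasDerivAt (fun y : ℝ => y - a) 1 x := (hasDerivAt_id x).sub_const a
  have h2 : HasDerivAt (fun y : ℝ => y - b) 1 x := (hasDerivAt_id x).sub_const b
  have hgx : HasDerivAt (deformedPoly (d-2) q) ((toPoly (d-2) q).derivative.eval x) x :=
    hasDerivAt_deformedPoly _ q x
  have h12 : HasDerivAt (fun y : ℝ => (y - a) * (y - b)) (1 * (x - b) + (x - a) * 1) x :=
    h1.mul h2
  have hfin := h12.mul hgx
  have hfeq : deformedPoly d (Phi d (a,b,q))
      = fun y => ((y - a) * (y - b)) * deformedPoly (d-2) q y :=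
    funext (eval_Phi d hd (a,b,q))
  rw [hfeq]
  exact hfin

set_option maxHeartbeats 1000000 in
/-- quantitative stability of the second lacuna condition -/
lemma tpred_nbhd {d : ℕ} (hd : 2 ≤ d) (he : Even d) {l₀ : Fin d → ℝ} (hT : Tpred d l₀) :
    ∃ δ > 0, ∀ lam : Fin d → ℝ, dist lam l₀ < δ →
      deformedPoly d lam 0 < 0 ∧ ¬ Pat d lam := by
  have hd0 : 0 < d := by omega
  have hdR : (0:ℝ) ≤ d := Nat.cast_nonneg d
  obtain ⟨w, hw, hwl⟩ := tpred_factor hd he hT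
  obtain ⟨a, b, q⟩ := w
  rw [mem_Dset] at hw
  obtain ⟨ha, hb, hq⟩ := hw
  simp only at ha hb hq
  subst hwl
  set f : ℝ → ℝ := deformedPoly d (Phi d (a,b,q)) with hfdef
  set g : ℝ → ℝ := deformedPoly (d-2) q with hgdef
  have heval : ∀ x, f x = (x - a) * (x - b) * g x := eval_Phi d hd (a,b,q)
  have hab : a < b := lt_trans ha hb
  have hfc : Continuous f := continuous_deformedPoly d _
  have hout : ∀ x, (x < a ∨ b < x) → 0 < f x := by
    intro x hx
    rw [heval x]
    rcases hx with h | h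
    · exact mul_pos (mul_pos_of_neg_of_neg (by linarith) (by linarith)) (hq x)
    · exact mul_pos (mul_pos (by linarith) (by linarith)) (hq x)
  have hin : ∀ x, a < x → x < b → f x < 0 := by
    intro x h1 h2
    rw [heval x, mul_assoc]
    exact mul_neg_of_pos_of_neg (by linarith) (mul_neg_of_neg_of_pos (by linarith) (hq x))
  have hf0 : f 0 < 0 := hin 0 ha hb
  set F : ℝ → ℝ := fun x => deriv f x with hF
  have hFc : Continuous F := by
    have hFeq : F = fun x => (toPoly d (Phi d (a,b,q))).derivative.eval x := by
      funext x
      exact deriv_deformedPoly d _ x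
    rw [hFeq]
    exact (toPoly d (Phi d (a,b,q))).derivative.continuous
  have hFa : F a = (a - b) * g a := by
    have h := (phi_hasDerivAt d hd a b q a).deriv
    show deriv f a = (a - b) * g a
    rw [hfdef, hgdef, h]
    ring
  have hFb : F b = (b - a) * g b := by
    have h := (phi_hasDerivAt d hd a b q b).deriv
    show deriv f b = (b - a) * g b
    rw [hfdef, hgdef, h]
    ring
  have hFa_neg : F a < 0 := by
    rw [hFa]
    exact mul_neg_of_neg_of_pos (by linarith) (hq a)
  have hFb_pos : 0 < F b := by
    rw [hFb]
    exact mul_pos (by linarith) (hq b)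
  -- neighbourhoods where the derivative keeps its sign
  have hcontA : ∀ᶠ x in nhds a, F x < F a / 2 :=
    hFc.continuousAt (Iio_mem_nhds (by linarith))
  rw [Metric.eventually_nhds_iff] at hcontA
  obtain ⟨ε₁, hε₁, hAd⟩ := hcontA
  have hcontB : ∀ᶠ x in nhds b, F b / 2 < F x :=
    hFc.continuousAt (Ioi_mem_nhds (by linarith))
  rw [Metric.eventually_nhds_iff] at hcontB
  obtain ⟨ε₂, hε₂, hBd⟩ := hcontB
  set ε : ℝ := min (min (ε₁/2) (ε₂/2)) (min 1 ((b-a)/4)) with hε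
  have hεpos : 0 < ε :=
    lt_min (lt_min (by linarith) (by linarith)) (lt_min one_pos (by linarith))
  have hε1 : ε ≤ 1 := le_trans (min_le_right _ _) (min_le_left _ _)
  have hεba : ε ≤ (b-a)/4 := le_trans (min_le_right _ _) (min_le_right _ _)
  have hεa : ∀ x, |x - a| ≤ ε → F x < F a / 2 := by
    intro x hx
    apply hAd
    rw [Real.dist_eq]
    have h1 : ε ≤ ε₁/2 := le_trans (min_le_left _ _) (min_le_left _ _)
    linarith
  have hεb : ∀ x, |x - b| ≤ ε → F b / 2 < F x := by
    intro x hx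
    apply hBd
    rw [Real.dist_eq]
    have h1 : ε ≤ ε₂/2 := le_trans (min_le_left _ _) (min_le_right _ _)
    linarith
  -- global scale
  set M0 : ℝ := ∑ i, |Phi d (a,b,q) i| with hM0
  have hM0nn : 0 ≤ M0 := Finset.sum_nonneg fun i _ => abs_nonneg _
  set M : ℝ := M0 + d + 3 with hM
  have hM1 : (1:ℝ) ≤ M := by linarith
  have hfa0 : f a = 0 := by rw [heval a]; ring
  have hfb0 : f b = 0 := by rw [heval b]; ring
  have haM : |a| ≤ M0 + 1 := by
    by_contra hc
    push_neg at hc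
    have := deformedPoly_pos_of_abs_ge he hd0 (Phi d (a,b,q)) hc.le
    rw [← hfdef] at this
    linarith [hfa0]
  have hbM : |b| ≤ M0 + 1 := by
    by_contra hc
    push_neg at hc
    have := deformedPoly_pos_of_abs_ge he hd0 (Phi d (a,b,q)) hc.le
    rw [← hfdef] at this
    linarith [hfb0]
  have haM' := abs_le.1 haM
  have hbM' := abs_le.1 hbM
  -- compact extrema
  have hK1ne : (Set.Icc (-M) (a - ε)).Nonempty := ⟨a - ε, by
    constructor
    · linarith [haM'.1]
    · exact le_refl (a - ε)⟩
  obtain ⟨x₁m, hx₁mmem, hx₁min⟩ := isCompact_Icc.exists_isMinOn hK1ne hfc.continuousOn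
  set c₁ : ℝ := f x₁m with hc₁def
  have hc₁ : 0 < c₁ := hout x₁m (Or.inl (by linarith [hx₁mmem.2]))
  have hK2ne : (Set.Icc (b + ε) M).Nonempty := ⟨b + ε, by
    constructor
    · exact le_refl (b + ε)
    · linarith [hbM'.2]⟩
  obtain ⟨x₂m, hx₂mmem, hx₂min⟩ := isCompact_Icc.exists_isMinOn hK2ne hfc.continuousOn
  set c₂ : ℝ := f x₂m with hc₂def
  have hc₂ : 0 < c₂ := hout x₂m (Or.inr (by linarith [hx₂mmem.1]))
  have hK3ne : (Set.Icc (a + ε) (b - ε)).Nonempty := ⟨a + ε, by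
    constructor
    · exact le_refl (a + ε)
    · linarith⟩
  obtain ⟨x₃m, hx₃mmem, hx₃max⟩ := isCompact_Icc.exists_isMaxOn hK3ne hfc.continuousOn
  set c₃ : ℝ := f x₃m with hc₃def
  have hc₃ : c₃ < 0 := hin x₃m (by linarith [hx₃mmem.1]) (by linarith [hx₃mmem.2])
  set η : ℝ := min (min c₁ c₂) (min (-c₃) (-(f 0))) with hη
  have hηpos : 0 < η :=
    lt_min (lt_min hc₁ hc₂) (lt_min (by linarith) (by linarith))
  -- error denominators
  set E1 : ℝ := d * M ^ d + 1 with hE1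
  set E2 : ℝ := d * (d * M ^ d) + 1 with hE2
  have hMd : (0:ℝ) < M ^ d := pow_pos (by linarith) d
  have hdMd : (0:ℝ) ≤ d * M ^ d := mul_nonneg hdR hMd.le
  have hddMd : (0:ℝ) ≤ d * (d * M ^ d) := mul_nonneg hdR hdMd
  have hE1pos : 0 < E1 := by rw [hE1]; linarith
  have hE2pos : 0 < E2 := by rw [hE2]; linarith
  set G : ℝ := min (-(F a)) (F b) with hG
  have hGpos : 0 < G := lt_min (by linarith) hFb_pos
  set δ : ℝ := min 1 (min ((η/2) / E1) ((G / 4) / E2)) with hδ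
  have hδpos : 0 < δ :=
    lt_min one_pos (lt_min (div_pos (by linarith) hE1pos) (div_pos (by linarith) hE2pos))
  have hδ1 : δ ≤ 1 := min_le_left _ _
  have hδE1 : δ ≤ (η/2) / E1 := le_trans (min_le_right _ _) (min_le_left _ _)
  have hδE2 : δ ≤ (G / 4) / E2 := le_trans (min_le_right _ _) (min_le_right _ _)
  refine ⟨δ, hδpos, ?_⟩
  intro lam hlam
  set S : ℝ := ∑ i, |lam i - Phi d (a,b,q) i| with hS
  have hSnn : 0 ≤ S := Finset.sum_nonneg fun i _ => abs_nonneg _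
  have hSd : S ≤ d * δ := by
    refine le_trans (sum_abs_sub_le d lam _) ?_
    exact mul_le_mul_of_nonneg_left hlam.le hdR
  have herrf : ∀ x, |x| ≤ M → |deformedPoly d lam x - f x| ≤ η/2 := by
    intro x hx
    refine le_trans (deformedPoly_diff_bound d lam _ hM1 hx) ?_
    have h1 : S * M ^ d ≤ d * δ * M ^ d := mul_le_mul_of_nonneg_right hSd hMd.le
    have h2 : d * δ * M ^ d ≤ (d * M ^ d) * ((η/2) / E1) := by
      calc d * δ * M ^ d = (d * M ^ d) * δ := by ring
      _ ≤ (d * M ^ d) * ((η/2) / E1) := mul_le_mul_of_nonneg_left hδE1 hdMd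
    have hr1 : (d * M ^ d) / E1 ≤ 1 := by
      rw [div_le_one hE1pos, hE1]
      linarith
    have h3 : (d * M ^ d) * ((η/2) / E1) ≤ η/2 := by
      have heq : (d * M ^ d) * ((η/2) / E1) = (d * M ^ d) / E1 * (η/2) := by ring
      rw [heq]
      calc (d * M ^ d) / E1 * (η/2) ≤ 1 * (η/2) :=
            mul_le_mul_of_nonneg_right hr1 (by linarith)
      _ = η/2 := one_mul _
    linarith
  have herrF : ∀ x, |x| ≤ M → |deriv (deformedPoly d lam) x - F x| ≤ G / 4 := by
    intro x hx
    have hFx : F x = deriv f x := rfl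
    have hbound := deriv_diff_bound d lam (Phi d (a,b,q)) hM1 hx
    rw [← hfdef, ← hFx] at hbound
    refine le_trans hbound ?_
    have h1 : S * (d * M ^ d) ≤ d * δ * (d * M ^ d) :=
      mul_le_mul_of_nonneg_right hSd hdMd
    have h2 : d * δ * (d * M ^ d) ≤ (d * (d * M ^ d)) * ((G/4) / E2) := by
      calc d * δ * (d * M ^ d) = (d * (d * M ^ d)) * δ := by ring
      _ ≤ (d * (d * M ^ d)) * ((G/4) / E2) := mul_le_mul_of_nonneg_left hδE2 hddMd
    have hr1 : (d * (d * M ^ d)) / E2 ≤ 1 := by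
      rw [div_le_one hE2pos, hE2]
      linarith
    have h3 : (d * (d * M ^ d)) * ((G/4) / E2) ≤ G/4 := by
      have heq : (d * (d * M ^ d)) * ((G/4) / E2) = (d * (d * M ^ d)) / E2 * (G/4) := by ring
      rw [heq]
      calc (d * (d * M ^ d)) / E2 * (G/4) ≤ 1 * (G/4) :=
            mul_le_mul_of_nonneg_right hr1 (by linarith)
      _ = G/4 := one_mul _
    linarith
  constructor
  · -- value at 0 stays negative
    have h0M : |(0:ℝ)| ≤ M := by
      rw [abs_zero]; linarith
    have herr := abs_le.1 (herrf 0 h0M)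
    have hη0 : η ≤ -(f 0) := le_trans (min_le_right _ _) (min_le_right _ _)
    linarith [herr.2]
  · rintro ⟨x₁, z, x₂, h12, h23, hn1, hpz, hn2⟩
    have hlamsum : (∑ i, |lam i|) + 1 ≤ M := by
      have h1 : ∑ i, |lam i| ≤ ∑ i, (|Phi d (a,b,q) i| + |lam i - Phi d (a,b,q) i|) := by
        apply Finset.sum_le_sum
        intro i _
        calc |lam i| = |Phi d (a,b,q) i + (lam i - Phi d (a,b,q) i)| := by
              congr 1; ring
        _ ≤ |Phi d (a,b,q) i| + |lam i - Phi d (a,b,q) i| := abs_add_le _ _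
      rw [Finset.sum_add_distrib] at h1
      have h2 : d * δ ≤ d * 1 := mul_le_mul_of_nonneg_left hδ1 hdR
      have : S ≤ d := by linarith
      rw [hM]
      linarith
    have hbnd : ∀ y, deformedPoly d lam y < 0 → |y| ≤ M := by
      intro y hy
      by_contra hc
      push_neg at hc
      have := deformedPoly_pos_of_abs_ge he hd0 lam (le_trans hlamsum hc.le)
      linarith
    have hx₁M := hbnd x₁ hn1
    have hx₂M := hbnd x₂ hn2
    have hzM : |z| ≤ M := by
      have h1 := abs_le.1 hx₁M
      have h2 := abs_le.1 hx₂M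
      rw [abs_le]
      constructor <;> linarith [h1.1, h2.2]
    have hloc : ∀ y, deformedPoly d lam y < 0 → |y| ≤ M → a - ε < y ∧ y < b + ε := by
      intro y hy hyM
      have herr := abs_le.1 (herrf y hyM)
      have hfy : f y < η := by
        have hηc : η ≤ c₁ := le_trans (min_le_left _ _) (min_le_left _ _)
        linarith [herr.1, hηpos]
      constructor
      · by_contra hc
        push_neg at hc
        have hymem : y ∈ Set.Icc (-M) (a-ε) := ⟨(abs_le.1 hyM).1, hc⟩
        have hmin := hx₁min hymem
        have hηc : η ≤ c₁ := le_trans (min_le_left _ _) (min_le_left _ _)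
        have : c₁ ≤ f y := hmin
        linarith
      · by_contra hc
        push_neg at hc
        have hymem : y ∈ Set.Icc (b+ε) M := ⟨hc, (abs_le.1 hyM).2⟩
        have hmin := hx₂min hymem
        have hηc : η ≤ c₂ := le_trans (min_le_left _ _) (min_le_right _ _)
        have : c₂ ≤ f y := hmin
        linarith
    obtain ⟨hx₁a, hx₁b⟩ := hloc x₁ hn1 hx₁M
    obtain ⟨hx₂a, hx₂b⟩ := hloc x₂ hn2 hx₂M
    have hza : a - ε < z := by linarith
    have hzb : z < b + ε := by linarith
    have herrz := abs_le.1 (herrf z hzM)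
    have hfz : -η < f z := by linarith [herrz.2, hηpos]
    have hznotmid : z < a + ε ∨ b - ε < z := by
      by_contra hc
      push_neg at hc
      have hzmem : z ∈ Set.Icc (a+ε) (b-ε) := ⟨hc.1, hc.2⟩
      have hmax := hx₃max hzmem
      have : f z ≤ c₃ := hmax
      have hηc : η ≤ -c₃ := le_trans (min_le_right _ _) (min_le_left _ _)
      linarith
    have hcl : Continuous (deformedPoly d lam) := continuous_deformedPoly d lam
    rcases hznotmid with hz | hz
    · -- near a : strictly decreasing
      have hderivA : ∀ x ∈ Set.Ioo (a-ε) (a+ε), deriv (deformedPoly d lam) x < 0 := by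
        intro x hx
        have hxa : |x - a| ≤ ε := by
          rw [abs_le]
          constructor <;> [linarith [hx.1]; linarith [hx.2]]
        have h1 := hεa x hxa
        have hxM : |x| ≤ M := by
          rw [abs_le]
          constructor <;> [linarith [haM'.1, hx.1]; linarith [haM'.2, hx.2]]
        have h2 := abs_le.1 (herrF x hxM)
        have h3 : G ≤ -(F a) := min_le_left _ _
        linarith [h2.2]
      have hanti : StrictAntiOn (deformedPoly d lam) (Set.Ioo (a-ε) (a+ε)) := by
        apply strictAntiOn_of_deriv_neg (convex_Ioo _ _) hcl.continuousOn
        intro x hx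
        rw [interior_Ioo] at hx
        exact hderivA x hx
      have hx₁mem : x₁ ∈ Set.Ioo (a-ε) (a+ε) := ⟨hx₁a, by linarith⟩
      have hzmem : z ∈ Set.Ioo (a-ε) (a+ε) := ⟨hza, hz⟩
      have := hanti hx₁mem hzmem h12
      linarith
    · -- near b : strictly increasing
      have hderivB : ∀ x ∈ Set.Ioo (b-ε) (b+ε), 0 < deriv (deformedPoly d lam) x := by
        intro x hx
        have hxb : |x - b| ≤ ε := by
          rw [abs_le]
          constructor <;> [linarith [hx.1]; linarith [hx.2]]
        have h1 := hεb x hxb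
        have hxM : |x| ≤ M := by
          rw [abs_le]
          constructor <;> [linarith [hbM'.1, hx.1]; linarith [hbM'.2, hx.2]]
        have h2 := abs_le.1 (herrF x hxM)
        have h3 : G ≤ F b := min_le_right _ _
        linarith [h2.1]
      have hmono : StrictMonoOn (deformedPoly d lam) (Set.Ioo (b-ε) (b+ε)) := by
        apply strictMonoOn_of_deriv_pos (convex_Ioo _ _) hcl.continuousOn
        intro x hx
        rw [interior_Ioo] at hx
        exact hderivB x hx
      have hzmem : z ∈ Set.Ioo (b-ε) (b+ε) := ⟨hz, hzb⟩
      have hx₂mem : x₂ ∈ Set.Ioo (b-ε) (b+ε) := ⟨by linarith, hx₂b⟩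
      have := hmono hzmem hx₂mem h23
      linarith

section Assembly

variable {d : ℕ}

lemma spos_not_discr {l : Fin d → ℝ} (hl : l ∈ Spos d) : l ∉ realDiscrB d := by
  rintro (h0 | ⟨x, hx, _⟩)
  · exact absurd h0 (ne_of_gt (hl 0))
  · exact absurd hx (ne_of_gt (hl x))

/-- the "bad" open ambient set -/
def U0 (d : ℕ) : Set (Fin d → ℝ) :=
  {l | ∃ x, deformedPoly d l x < 0} ∩
    ({l | 0 < deformedPoly d l 0} ∪ {l | Pat d l})

lemma isOpen_U0 (d : ℕ) : IsOpen (U0 d) :=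
  (isOpen_neg_somewhere d).inter ((isOpen_f0_pos d).union (isOpen_pat d))

lemma scompl {l : Fin d → ℝ} (hl : l ∉ realDiscrB d) :
    (¬ ∀ x, 0 < deformedPoly d l x) ↔
      l ∈ U0 d ∪ {l | deformedPoly d l 0 < 0} := by
  constructor
  · intro h
    push_neg at h
    obtain ⟨x₀, hx₀⟩ := h
    rcases lt_trichotomy (deformedPoly d l 0) 0 with h0 | h0 | h0
    · exact Or.inr h0
    · exact absurd h0 (f0_ne_zero hl)
    · left
      refine ⟨?_, Or.inl h0⟩
      rcases lt_or_eq_of_le hx₀ with h | h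
      · exact ⟨x₀, h⟩
      · obtain ⟨x, _, hx⟩ := exists_neg_near_root hl h one_pos
        exact ⟨x, hx⟩
  · rintro (⟨⟨x, hx⟩, _⟩ | h0) h
    · exact absurd hx (not_lt.2 (h x).le)
    · exact absurd (h 0) (not_lt.2 h0.le)

lemma tcompl {l : Fin d → ℝ} (hl : l ∉ realDiscrB d) :
    (¬ (deformedPoly d l 0 < 0 ∧ ¬ Pat d l)) ↔
      l ∈ U0 d ∪ {l | 0 < deformedPoly d l 0} := by
  constructor
  · intro h
    rcases not_and_or.1 h with h0 | hp
    · push_neg at h0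
      right
      exact lt_of_le_of_ne h0 (Ne.symm (f0_ne_zero hl))
    · push_neg at hp
      left
      obtain ⟨x₁, z, x₂, _, _, hn1, _, _⟩ := id hp
      exact ⟨⟨x₁, hn1⟩, Or.inr hp⟩
  · rintro (⟨_, h2⟩ | h0)
    · rcases h2 with h2 | h2
      · intro hc
        exact absurd h2 (not_lt.2 hc.1.le)
      · intro hc
        exact hc.2 h2
    · intro hc
      exact absurd h0 (not_lt.2 hc.1.le)

/-- the base point `x^e + 1` (or `1` when `e = 0`) is everywhere positive -/
lemma basepoint_pos (e : ℕ) (he : Even e) :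
    (fun i : Fin e => if (i : ℕ) = 0 then (1:ℝ) else 0) ∈ Spos e := by
  intro x
  rcases Nat.eq_zero_or_pos e with h | h
  · subst h
    simp [deformedPoly]
  · have hsum : ∑ i : Fin e, (if (i:ℕ) = 0 then (1:ℝ) else 0) * x ^ (i:ℕ) = 1 := by
      rw [Finset.sum_eq_single (⟨0, h⟩ : Fin e)]
      · simp
      · intro b _ hb
        rw [if_neg, zero_mul]
        intro hb'
        exact hb (by ext; simp [hb'])
      · intro hb; exact absurd (Finset.mem_univ _) hb
    unfold deformedPoly
    rw [hsum]
    have := he.pow_nonneg x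
    linarith

end Assembly

section Main

variable {d : ℕ}

/-- the two candidate subsets of the subtype -/
def SX (d : ℕ) : Set ↥((realDiscrB d)ᶜ) := Subtype.val ⁻¹' (Spos d)

def TX (d : ℕ) : Set ↥((realDiscrB d)ᶜ) := Subtype.val ⁻¹' {l | Tpred d l}

lemma mem_SX {l : ↥((realDiscrB d)ᶜ)} : l ∈ SX d ↔ ∀ x, 0 < deformedPoly d l.1 x := Iff.rfl

lemma mem_TX {l : ↥((realDiscrB d)ᶜ)} :
    l ∈ TX d ↔ deformedPoly d l.1 0 < 0 ∧ ¬ Pat d l.1 := by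
  constructor
  · intro h; exact h.2
  · intro h; exact ⟨l.2, h⟩

lemma isOpen_SX (he : Even d) (hd : 0 < d) : IsOpen (SX d) :=
  (isOpen_Spos he hd).preimage continuous_subtype_val

lemma isClosed_SX : IsClosed (SX d) := by
  have : (SX d)ᶜ = Subtype.val ⁻¹' (U0 d ∪ {l | deformedPoly d l 0 < 0}) := by
    ext l
    simp only [Set.mem_compl_iff, Set.mem_preimage]
    exact scompl l.2
  rw [← isOpen_compl_iff, this]
  exact ((isOpen_U0 d).union (isOpen_f0_neg d)).preimage continuous_subtype_val

lemma isClosed_TX : IsClosed (TX d) := by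
  have : (TX d)ᶜ = Subtype.val ⁻¹' (U0 d ∪ {l | 0 < deformedPoly d l 0}) := by
    ext l
    simp only [Set.mem_compl_iff, Set.mem_preimage]
    rw [show (l ∈ TX d) = (deformedPoly d l.1 0 < 0 ∧ ¬ Pat d l.1) from propext mem_TX]
    exact tcompl l.2
  rw [← isOpen_compl_iff, this]
  exact ((isOpen_U0 d).union (isOpen_f0_pos d)).preimage continuous_subtype_val

lemma isOpen_TX (hd : 2 ≤ d) (he : Even d) : IsOpen (TX d) := by
  rw [isOpen_induced_iff]
  classical
  refine ⟨⋃ (l₀ : Fin d → ℝ) (h : Tpred d l₀),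
    Metric.ball l₀ (Classical.choose (tpred_nbhd hd he h)), ?_, ?_⟩
  · exact isOpen_iUnion fun l₀ => isOpen_iUnion fun h => Metric.isOpen_ball
  · ext l
    simp only [Set.mem_preimage, Set.mem_iUnion]
    constructor
    · rintro ⟨l₀, h₀, hball⟩
      obtain ⟨hδ, hprop⟩ := Classical.choose_spec (tpred_nbhd hd he h₀)
      rw [Metric.mem_ball] at hball
      exact mem_TX.2 (hprop l.1 hball)
    · intro h
      obtain ⟨hδ, hprop⟩ := Classical.choose_spec (tpred_nbhd hd he h)
      exact ⟨l.1, h, Metric.mem_ball_self hδ⟩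

lemma isPreconnected_SX : IsPreconnected (SX d) := by
  rw [← Topology.IsInducing.subtypeVal.isPreconnected_image]
  have : Subtype.val '' SX d = Spos d := by
    rw [SX, Set.image_preimage_eq_inter_range, Subtype.range_coe]
    exact Set.inter_eq_left.2 fun l hl => spos_not_discr hl
  rw [this]
  exact (convex_Spos d).isPreconnected

lemma isPreconnected_TX (hd : 2 ≤ d) (he : Even d) : IsPreconnected (TX d) := by
  rw [← Topology.IsInducing.subtypeVal.isPreconnected_image]
  have : Subtype.val '' TX d = {l | Tpred d l} := by
    rw [TX, Set.image_preimage_eq_inter_range, Subtype.range_coe]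
    exact Set.inter_eq_left.2 fun l hl => hl.1
  rw [this]
  have himage : {l : Fin d → ℝ | Tpred d l} = Phi d '' Dset d := by
    apply Set.eq_of_subset_of_subset
    · intro l hl
      obtain ⟨w, hw, hwl⟩ := tpred_factor hd he hl
      exact ⟨w, hw, hwl⟩
    · rintro _ ⟨w, hw, rfl⟩
      exact phi_mem_Tpred d hd hw
  rw [himage]
  exact ((convex_Dset d).isPreconnected).image _ (continuous_Phi d).continuousOn

/-- the base point of the first lacuna -/
def sbase (d : ℕ) : Fin d → ℝ := fun i => if (i : ℕ) = 0 then 1 else 0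

lemma sbase_mem (he : Even d) : sbase d ∈ Spos d := basepoint_pos d he

/-- the base point of the second lacuna -/
noncomputable def tbase (d : ℕ) : Fin d → ℝ :=
  Phi d (-1, 1, fun i => if (i : ℕ) = 0 then 1 else 0)

lemma tbase_mem (hd : 2 ≤ d) (he : Even d) : Tpred d (tbase d) := by
  apply phi_mem_Tpred d hd
  rw [mem_Dset]
  refine ⟨by norm_num, by norm_num, ?_⟩
  have hev : Even (d - 2) := by
    obtain ⟨m, hm⟩ := he
    exact ⟨m - 1, by omega⟩
  exact basepoint_pos (d-2) hev

end Main

/-- Exactly `2` connected components of the complement of the real discriminant of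
`B_{2k}⁺` are lacunas. -/
theorem stmt11 (k : ℕ) (hk : 1 ≤ k) :
    Nat.card {Γ : ConnectedComponents ↥((realDiscrB (2 * k))ᶜ) //
      IsLacuna (2 * k) (levelSetBplus (2 * k)) Γ} = 2 := by
  set d := 2 * k with hdk
  have hd2 : 2 ≤ d := by omega
  have hd0 : 0 < d := by omega
  have he : Even d := ⟨k, by omega⟩
  have hs : sbase d ∈ Spos d := sbase_mem he
  have ht : Tpred d (tbase d) := tbase_mem hd2 he
  set s₀ : ↥((realDiscrB d)ᶜ) := ⟨sbase d, spos_not_discr hs⟩ with hs₀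
  set t₀ : ↥((realDiscrB d)ᶜ) := ⟨tbase d, ht.1⟩ with ht₀
  have hs₀S : s₀ ∈ SX d := hs
  have ht₀T : t₀ ∈ TX d := ht
  have hSclop : IsClopen (SX d) := ⟨isClosed_SX, isOpen_SX he hd0⟩
  have hTclop : IsClopen (TX d) := ⟨isClosed_TX, isOpen_TX hd2 he⟩
  have hScomp : connectedComponent s₀ = SX d :=
    le_antisymm (hSclop.connectedComponent_subset hs₀S)
      (isPreconnected_SX.subset_connectedComponent hs₀S)
  have hTcomp : connectedComponent t₀ = TX d :=
    le_antisymm (hTclop.connectedComponent_subset ht₀T)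
      ((isPreconnected_TX hd2 he).subset_connectedComponent ht₀T)
  have hLc_iff : ∀ l : ↥((realDiscrB d)ᶜ),
      Lc d l.1 ↔ (l ∈ SX d ∨ l ∈ TX d) := by
    intro l
    rw [key_iff l.2, mem_SX, mem_TX]
  have hlac : ∀ Γ, IsLacuna d (levelSetBplus d) Γ ↔
      (Γ = ConnectedComponents.mk s₀ ∨ Γ = ConnectedComponents.mk t₀) := by
    intro Γ
    constructor
    · intro hΓ
      obtain ⟨l, rfl⟩ := ConnectedComponents.surjective_coe Γ
      have hLcl : Lc d l.1 := hΓ l rfl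
      rcases (hLc_iff l).1 hLcl with h | h
      · left
        have hcl : connectedComponent l = SX d :=
          le_antisymm (hSclop.connectedComponent_subset h)
            (isPreconnected_SX.subset_connectedComponent h)
        exact ConnectedComponents.coe_eq_coe.2 (by rw [hcl, hScomp])
      · right
        have hcl : connectedComponent l = TX d :=
          le_antisymm (hTclop.connectedComponent_subset h)
            ((isPreconnected_TX hd2 he).subset_connectedComponent h)
        exact ConnectedComponents.coe_eq_coe.2 (by rw [hcl, hTcomp])
    · rintro (rfl | rfl)
      · intro l hml
        have hcl : connectedComponent l = connectedComponent s₀ :=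
          ConnectedComponents.coe_eq_coe.1 hml
        have hlS : l ∈ SX d := by
          rw [← hScomp, ← hcl]
          exact mem_connectedComponent
        exact (hLc_iff l).2 (Or.inl hlS)
      · intro l hml
        have hcl : connectedComponent l = connectedComponent t₀ :=
          ConnectedComponents.coe_eq_coe.1 hml
        have hlT : l ∈ TX d := by
          rw [← hTcomp, ← hcl]
          exact mem_connectedComponent
        exact (hLc_iff l).2 (Or.inr hlT)
  have hne : (ConnectedComponents.mk s₀ : ConnectedComponents ↥((realDiscrB d)ᶜ))
      ≠ ConnectedComponents.mk t₀ := by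
    intro h
    have hcc := ConnectedComponents.coe_eq_coe.1 h
    rw [hScomp, hTcomp] at hcc
    have : t₀ ∈ SX d := by rw [hcc]; exact ht₀T
    have h1 := mem_SX.1 this 0
    have h2 := ht.2.1
    linarith
  have hset : {Γ : ConnectedComponents ↥((realDiscrB d)ᶜ) |
      IsLacuna d (levelSetBplus d) Γ}
      = {ConnectedComponents.mk s₀, ConnectedComponents.mk t₀} := by
    ext Γ
    rw [Set.mem_setOf_eq, hlac Γ]
    simp [Set.mem_insert_iff]
  have h1 : {Γ : ConnectedComponents ↥((realDiscrB d)ᶜ) //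
      IsLacuna d (levelSetBplus d) Γ}
      = ↥({ConnectedComponents.mk s₀, ConnectedComponents.mk t₀} :
        Set (ConnectedComponents ↥((realDiscrB d)ᶜ))) := by
    rw [← hset]
    rfl
  rw [h1, Nat.card_coe_set_eq, Set.ncard_pair hne]
end

section
/- Let P be a monic real polynomial of positive degree, let m ≥ 2, and let Q be a nondegenerate quadratic form on ℝ^m whose positive and negative inertia indices are both nonzero (i.e. Q is indefinite). Then the set W = {(x,u) ∈ ℝ × ℝ^m : P(x) + Q(u) = 0} is nonempty and every connected component of W intersects the hyperplane {x = 0}. -/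
open QuadraticMap

private lemma stmt18_path (P : Polynomial ℝ) {m : ℕ} (Q : QuadraticForm ℝ (Fin m → ℝ))
    (x : ℝ) (u w : Fin m → ℝ) (hw : Q w = 0) (hd : polar Q u w ≠ 0)
    (hxu : P.eval x + Q u = 0) :
    ∃ r ∈ connectedComponentIn {p : ℝ × (Fin m → ℝ) | P.eval p.1 + Q p.2 = 0} (x, u),
      r.1 = 0 := by
  set d := polar Q u w with hdd
  set γ : ℝ → ℝ × (Fin m → ℝ) :=
    fun s => ((1 - s) * x, u + ((P.eval x - P.eval ((1 - s) * x)) / d) • w) with hγ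
  have hcont : Continuous γ := by
    refine Continuous.prodMk (by fun_prop) ?_
    refine continuous_const.add (Continuous.smul (f := fun s : ℝ => (P.eval x - P.eval ((1 - s) * x)) / d)
      (g := fun _ : ℝ => w) ?_ continuous_const)
    exact (continuous_const.sub (P.continuous.comp (by fun_prop))).div_const d
  have hmem : ∀ s, γ s ∈ {p : ℝ × (Fin m → ℝ) | P.eval p.1 + Q p.2 = 0} := by
    intro s
    show P.eval ((1 - s) * x) + Q (u + ((P.eval x - P.eval ((1 - s) * x)) / d) • w) = 0
    rw [QuadraticMap.map_add (⇑Q) u, QuadraticMap.map_smul, hw, polar_smul_right, smul_eq_mul,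
      smul_eq_mul, ← hdd, div_mul_cancel₀ _ hd]
    ring_nf
    linarith [hxu]
  have h0 : γ 0 = (x, u) := by simp [hγ]
  have hsub : Set.range γ ⊆ {p : ℝ × (Fin m → ℝ) | P.eval p.1 + Q p.2 = 0} := by
    rintro _ ⟨s, rfl⟩; exact hmem s
  have hpre : IsPreconnected (Set.range γ) := isPreconnected_range hcont
  refine ⟨γ 1, hpre.subset_connectedComponentIn (h0 ▸ Set.mem_range_self 0) hsub
    (Set.mem_range_self 1), by simp [hγ]⟩

/-- Let `P` be a monic real polynomial of positive degree and `Q` a nondegenerate indefinite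
quadratic form on `ℝ^m` (`m ≥ 2`), i.e. both inertia indices of `Q` are nonzero. Then the
real zero level set `W = {(x,u) : P(x) + Q(u) = 0}` of the stabilized `B`-type morsification
is nonempty and each of its connected components meets the boundary hyperplane `{x = 0}`. -/
theorem stmt18 (P : Polynomial ℝ) (hP : P.Monic) (hdeg : 0 < P.natDegree)
    (m : ℕ) (hm : 2 ≤ m) (Q : QuadraticForm ℝ (Fin m → ℝ))
    (hQnd : LinearMap.BilinForm.Nondegenerate (QuadraticMap.polarBilin Q))
    (hQpos : ∃ u, 0 < Q u) (hQneg : ∃ u, Q u < 0) :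
    Set.Nonempty {p : ℝ × (Fin m → ℝ) | P.eval p.1 + Q p.2 = 0} ∧
    ∀ p ∈ {p : ℝ × (Fin m → ℝ) | P.eval p.1 + Q p.2 = 0},
      ∃ r ∈ connectedComponentIn {p : ℝ × (Fin m → ℝ) | P.eval p.1 + Q p.2 = 0} p,
        r.1 = 0 := by
  obtain ⟨up, hup⟩ := hQpos
  obtain ⟨un, hun⟩ := hQneg
  obtain ⟨a, ha⟩ : ∃ a, Q a = 1 := by
    refine ⟨(Real.sqrt (Q up))⁻¹ • up, ?_⟩
    rw [QuadraticMap.map_smul, ← mul_inv, Real.mul_self_sqrt hup.le, smul_eq_mul,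
      inv_mul_cancel₀ hup.ne']
  obtain ⟨b, hb⟩ : ∃ b, Q b = -1 := by
    refine ⟨(Real.sqrt (-Q un))⁻¹ • un, ?_⟩
    rw [QuadraticMap.map_smul, ← mul_inv, Real.mul_self_sqrt (by linarith), smul_eq_mul,
      inv_neg, neg_mul, inv_mul_cancel₀ hun.ne]
  -- surjectivity of Q
  have hsurj : ∀ c : ℝ, ∃ u, Q u = c := by
    intro c
    rcases le_or_gt 0 c with hc | hc
    · exact ⟨Real.sqrt c • a, by
        rw [QuadraticMap.map_smul, ha, smul_eq_mul, mul_one, Real.mul_self_sqrt hc]⟩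
    · exact ⟨Real.sqrt (-c) • b, by
        rw [QuadraticMap.map_smul, hb, smul_eq_mul, Real.mul_self_sqrt (by linarith)]; ring⟩
  -- isotropic directions
  set B := polar (⇑Q) a b with hB
  set D := Real.sqrt (B ^ 2 + 4) with hD
  have hD2 : D ^ 2 = B ^ 2 + 4 := Real.sq_sqrt (by positivity)
  have key : ∀ s : ℝ, s ^ 2 = B * s + 1 → Q (a + s • b) = 0 := by
    intro s hs
    rw [QuadraticMap.map_add (⇑Q), QuadraticMap.map_smul, polar_smul_right, ha, hb,
      smul_eq_mul, smul_eq_mul, ← hB]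
    nlinarith [hs]
  set s₁ := (B + D) / 2 with hs₁
  set s₂ := (B - D) / 2 with hs₂
  set w₁ : Fin m → ℝ := a + s₁ • b with hw₁'
  set w₂ : Fin m → ℝ := a + s₂ • b with hw₂'
  have hw₁ : Q w₁ = 0 := key s₁ (by rw [hs₁]; linear_combination hD2 / 4)
  have hw₂ : Q w₂ = 0 := key s₂ (by rw [hs₂]; linear_combination hD2 / 4)
  have hprod : s₁ * s₂ = -1 := by rw [hs₁, hs₂]; linear_combination -hD2 / 4
  have hsum : s₁ + s₂ = B := by rw [hs₁, hs₂]; ring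
  have h1212 : polar (⇑Q) w₁ w₂ = B ^ 2 + 4 := by
    rw [hw₁', hw₂']
    simp only [polar_add_left, polar_add_right, polar_smul_left, polar_smul_right,
      polar_self, smul_eq_mul, two_nsmul, ha, hb]
    rw [polar_comm (⇑Q) b a, ← hB]
    linear_combination B * hsum - 2 * hprod
  constructor
  · obtain ⟨u₀, hu₀⟩ := hsurj (-P.eval 0)
    exact ⟨(0, u₀), by simp [hu₀]⟩
  · rintro ⟨x, u⟩ hp
    have hxu : P.eval x + Q u = 0 := hp
    by_cases h1 : polar (⇑Q) u w₁ ≠ 0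
    · exact stmt18_path P Q x u w₁ hw₁ h1 hxu
    by_cases h2 : polar (⇑Q) u w₂ ≠ 0
    · exact stmt18_path P Q x u w₂ hw₂ h2 hxu
    push_neg at h1 h2
    -- degenerate case: move to u + w₁ inside the level set, then use w₂
    set u' : Fin m → ℝ := u + w₁ with hu'
    have hQu' : Q u' = Q u := by
      rw [hu', QuadraticMap.map_add (⇑Q), hw₁, h1]; ring
    have hd' : polar (⇑Q) u' w₂ ≠ 0 := by
      rw [hu', polar_add_left, h2, h1212]
      positivity
    obtain ⟨r, hr, hr0⟩ := stmt18_path P Q x u' w₂ hw₂ hd' (by rw [hQu']; exact hxu)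
    -- the segment from u to u' stays in W
    set σ : ℝ → ℝ × (Fin m → ℝ) := fun s => (x, u + s • w₁) with hσ
    have hσmem : ∀ s, σ s ∈ {p : ℝ × (Fin m → ℝ) | P.eval p.1 + Q p.2 = 0} := by
      intro s
      show P.eval x + Q (u + s • w₁) = 0
      rw [QuadraticMap.map_add (⇑Q), QuadraticMap.map_smul, polar_smul_right, hw₁, h1]
      simpa using hxu
    have hσcont : Continuous σ :=
      Continuous.prodMk continuous_const
        (continuous_const.add (continuous_id.smul continuous_const))
    have hsub : Set.range σ ⊆ {p : ℝ × (Fin m → ℝ) | P.eval p.1 + Q p.2 = 0} := by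
      rintro _ ⟨s, rfl⟩; exact hσmem s
    have h0 : σ 0 = (x, u) := by simp [hσ]
    have h1' : σ 1 = (x, u') := by simp [hσ, hu']
    have hmemc : (x, u') ∈ connectedComponentIn
        {p : ℝ × (Fin m → ℝ) | P.eval p.1 + Q p.2 = 0} (x, u) := by
      have := (isPreconnected_range hσcont).subset_connectedComponentIn
        (Set.mem_range.mpr ⟨0, h0⟩) hsub (Set.mem_range_self 1)
      rwa [h1'] at this
    exact ⟨r, (connectedComponentIn_eq hmemc) ▸ hr, hr0⟩
end

section
/- Let q be a real polynomial with q(0) ≠ 0, let m ≥ 2, and let Q be a quadratic form on ℝ^m. Consider W = {(x,y,z) ∈ ℝ × ℝ × ℝ^m : xy + q(y) + Q(z) = 0}. (1) If Q is nondegenerate and indefinite (both inertia indices nonzero), then W is connected. (2) If Q is positive definite and q(0) > 0, then W has exactly two connected components, one contained in {y > 0} and one contained in {y < 0}. -/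
open Set

private lemma quad_continuous {m : ℕ} (Q : QuadraticForm ℝ (Fin m → ℝ)) :
    Continuous fun z => Q z := by
  have key : ∀ z : Fin m → ℝ,
      Q z = (1/2) * ∑ i, z i * Q.polarBilin (Pi.single i 1 : Fin m → ℝ) z := by
    intro z
    have h2 : (z : Fin m → ℝ) = ∑ i, z i • (Pi.single i 1 : Fin m → ℝ) := by
      conv_lhs => rw [← Finset.univ_sum_single z]
      congr 1; funext i
      rw [← Pi.single_smul, smul_eq_mul, mul_one]
    have h3 : Q.polarBilin z z = ∑ i, z i * Q.polarBilin (Pi.single i 1 : Fin m → ℝ) z := by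
      calc Q.polarBilin z z = Q.polarBilin.flip z (∑ i, z i • (Pi.single i 1 : Fin m → ℝ)) := by
            rw [← h2]; rfl
        _ = ∑ i, z i * Q.polarBilin (Pi.single i 1 : Fin m → ℝ) z := by
            rw [map_sum]; simp [LinearMap.flip_apply, smul_eq_mul]
    have h1 : Q.polarBilin z z = 2 * Q z := by
      simp [QuadraticMap.polarBilin_apply_apply, QuadraticMap.polar_self, two_smul]
      ring
    rw [← h3, h1]; ring
  have : (fun z => Q z) = fun z => (1/2) * ∑ i, z i * Q.polarBilin (Pi.single i 1 : Fin m → ℝ) z :=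
    funext key
  rw [this]
  exact continuous_const.mul (continuous_finset_sum _ fun i _ =>
    (continuous_apply i).mul (Q.polarBilin (Pi.single i 1 : Fin m → ℝ)).continuous_of_finiteDimensional)

private lemma graph_preconn {m : ℕ} (q : Polynomial ℝ) (Qf : (Fin m → ℝ) → ℝ)
    (hQf : Continuous Qf) (S : Set ℝ) (hS : IsPreconnected S) (h0 : (0:ℝ) ∉ S) :
    IsPreconnected {p : ℝ × ℝ × (Fin m → ℝ) |
      p.1 * p.2.1 + q.eval p.2.1 + Qf p.2.2 = 0 ∧ p.2.1 ∈ S} := by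
  have himg : {p : ℝ × ℝ × (Fin m → ℝ) | p.1 * p.2.1 + q.eval p.2.1 + Qf p.2.2 = 0 ∧ p.2.1 ∈ S}
      = (fun w : ℝ × (Fin m → ℝ) => (-(q.eval w.1 + Qf w.2) / w.1, w.1, w.2)) '' (S ×ˢ univ) := by
    ext ⟨x, y, z⟩
    constructor
    · rintro ⟨heq, hy⟩
      have hy0 : y ≠ 0 := fun h => h0 (h ▸ hy)
      have hx : x = -(q.eval y + Qf z) / y := by
        field_simp
        linarith [heq]
      exact ⟨(y, z), mk_mem_prod hy (mem_univ _), by simp only []; rw [← hx]⟩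
    · rintro ⟨⟨y', z'⟩, hw, heq⟩
      have hy' : y' ∈ S := hw.1
      have hy0 : y' ≠ 0 := fun h => h0 (h ▸ hy')
      rw [← heq]
      refine ⟨?_, hy'⟩
      show -(q.eval y' + Qf z') / y' * y' + q.eval y' + Qf z' = 0
      field_simp
      ring
  rw [himg]
  apply (hS.prod isPreconnected_univ).image
  apply ContinuousOn.prodMk
  · apply ContinuousOn.div
    · exact ((q.continuous.comp continuous_fst).add (hQf.comp continuous_snd)).neg.continuousOn
    · exact continuous_fst.continuousOn
    · rintro ⟨y, z⟩ ⟨hy, -⟩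
      exact fun h => h0 (h ▸ hy)
  · exact (continuous_fst.prodMk continuous_snd).continuousOn



/-- The real zero level set `W = {(x,y,z) : xy + q(y) + Q(z) = 0}` of an (r,s)-stabilization
of a typical `C_k` morsification (`q(0) ≠ 0`):
(1) if `Q` is nondegenerate and indefinite then `W` is connected;
(2) if `Q` is positive definite and `q(0) > 0` then `W` has exactly two connected
components, one contained in `{y > 0}` and one contained in `{y < 0}`. -/
theorem stmt19 (q : Polynomial ℝ) (hq : q.eval 0 ≠ 0)
    (m : ℕ) (hm : 2 ≤ m) (Q : QuadraticForm ℝ (Fin m → ℝ)) :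
    ((LinearMap.BilinForm.Nondegenerate (QuadraticMap.polarBilin Q) ∧
        (∃ u, 0 < Q u) ∧ (∃ u, Q u < 0)) →
      IsConnected {p : ℝ × ℝ × (Fin m → ℝ) | p.1 * p.2.1 + q.eval p.2.1 + Q p.2.2 = 0}) ∧
    ((Q.PosDef ∧ 0 < q.eval 0) →
      ∃ Cpos Cneg : Set (ℝ × ℝ × (Fin m → ℝ)),
        (∀ p ∈ {p : ℝ × ℝ × (Fin m → ℝ) | p.1 * p.2.1 + q.eval p.2.1 + Q p.2.2 = 0},
          connectedComponentIn
            {p : ℝ × ℝ × (Fin m → ℝ) | p.1 * p.2.1 + q.eval p.2.1 + Q p.2.2 = 0} p = Cpos ∨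
          connectedComponentIn
            {p : ℝ × ℝ × (Fin m → ℝ) | p.1 * p.2.1 + q.eval p.2.1 + Q p.2.2 = 0} p = Cneg) ∧
        (∃ p ∈ {p : ℝ × ℝ × (Fin m → ℝ) | p.1 * p.2.1 + q.eval p.2.1 + Q p.2.2 = 0},
          connectedComponentIn
            {p : ℝ × ℝ × (Fin m → ℝ) | p.1 * p.2.1 + q.eval p.2.1 + Q p.2.2 = 0} p = Cpos) ∧
        (∃ p ∈ {p : ℝ × ℝ × (Fin m → ℝ) | p.1 * p.2.1 + q.eval p.2.1 + Q p.2.2 = 0},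
          connectedComponentIn
            {p : ℝ × ℝ × (Fin m → ℝ) | p.1 * p.2.1 + q.eval p.2.1 + Q p.2.2 = 0} p = Cneg) ∧
        Cpos ≠ Cneg ∧
        Cpos ⊆ {p : ℝ × ℝ × (Fin m → ℝ) | 0 < p.2.1} ∧
        Cneg ⊆ {p : ℝ × ℝ × (Fin m → ℝ) | p.2.1 < 0}) := by
  have hQc : Continuous fun z : Fin m → ℝ => Q z := quad_continuous Q
  set W := {p : ℝ × ℝ × (Fin m → ℝ) | p.1 * p.2.1 + q.eval p.2.1 + Q p.2.2 = 0} with hWdef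
  -- the quotient polynomial r with q(t) - q(0) = t * r(t)
  obtain ⟨r, hr⟩ : ∃ r : Polynomial ℝ, q - Polynomial.C (q.eval 0) = Polynomial.X * r := by
    have : Polynomial.X ∣ q - Polynomial.C (q.eval 0) := by
      rw [Polynomial.X_dvd_iff]
      simp [Polynomial.coeff_zero_eq_eval_zero]
    exact this
  have hrt : ∀ t : ℝ, q.eval t - q.eval 0 = t * r.eval t := by
    intro t
    have := congrArg (Polynomial.eval t) hr
    simpa using this
  -- the graph pieces over y > 0 and y < 0
  set Gpos := {p : ℝ × ℝ × (Fin m → ℝ) |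
    p.1 * p.2.1 + q.eval p.2.1 + Q p.2.2 = 0 ∧ p.2.1 ∈ Ioi (0:ℝ)} with hGposdef
  set Gneg := {p : ℝ × ℝ × (Fin m → ℝ) |
    p.1 * p.2.1 + q.eval p.2.1 + Q p.2.2 = 0 ∧ p.2.1 ∈ Iio (0:ℝ)} with hGnegdef
  have hGpos : IsPreconnected Gpos :=
    graph_preconn q (fun z => Q z) hQc (Ioi 0) isPreconnected_Ioi (by simp)
  have hGneg : IsPreconnected Gneg :=
    graph_preconn q (fun z => Q z) hQc (Iio 0) isPreconnected_Iio (by simp)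
  have hGposW : Gpos ⊆ W := fun p hp => hp.1
  have hGnegW : Gneg ⊆ W := fun p hp => hp.1
  constructor
  · -- Part (1): indefinite nondegenerate Q
    rintro ⟨-, ⟨u, hu⟩, ⟨v, hv⟩⟩
    obtain ⟨z0, hz0⟩ : ∃ z0 : Fin m → ℝ, Q z0 = -q.eval 0 := by
      rcases lt_or_gt_of_ne hq with hneg | hpos
      · -- q(0) < 0, need Q z0 = -q(0) > 0, scale u
        refine ⟨Real.sqrt (-q.eval 0 / Q u) • u, ?_⟩
        rw [QuadraticMap.map_smul, smul_eq_mul, Real.mul_self_sqrt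
          (le_of_lt (div_pos (by linarith) hu))]
        exact div_mul_cancel₀ _ (ne_of_gt hu)
      · -- q(0) > 0, need Q z0 = -q(0) < 0, scale v
        refine ⟨Real.sqrt (-q.eval 0 / Q v) • v, ?_⟩
        rw [QuadraticMap.map_smul, smul_eq_mul, Real.mul_self_sqrt
          (le_of_lt (div_pos_of_neg_of_neg (by linarith) hv))]
        exact div_mul_cancel₀ _ (ne_of_lt hv)
    -- the connecting curves
    have hKsub : ∀ z : Fin m → ℝ, Q z = -q.eval 0 →
        (range fun t : ℝ => ((-(r.eval t), t, z) : ℝ × ℝ × (Fin m → ℝ))) ⊆ W := by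
      rintro z hz p ⟨t, rfl⟩
      show -(r.eval t) * t + q.eval t + Q z = 0
      rw [hz]
      linear_combination hrt t
    have hLsub : ∀ z : Fin m → ℝ, Q z = -q.eval 0 →
        (range fun s : ℝ => ((s, 0, z) : ℝ × ℝ × (Fin m → ℝ))) ⊆ W := by
      rintro z hz p ⟨s, rfl⟩
      show s * 0 + q.eval 0 + Q z = 0
      rw [hz]; ring
    have hKpre : ∀ z : Fin m → ℝ,
        IsPreconnected (range fun t : ℝ => ((-(r.eval t), t, z) : ℝ × ℝ × (Fin m → ℝ))) := by
      intro z
      exact isPreconnected_range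
        (((r.continuous).neg.prodMk (continuous_id.prodMk continuous_const)))
    have hLpre : ∀ z : Fin m → ℝ,
        IsPreconnected (range fun s : ℝ => ((s, 0, z) : ℝ × ℝ × (Fin m → ℝ))) := by
      intro z
      exact isPreconnected_range (continuous_id.prodMk continuous_const)
    -- curve endpoints in the graph pieces
    have hKpos : ∀ z : Fin m → ℝ, Q z = -q.eval 0 →
        ((-(r.eval 1), 1, z) : ℝ × ℝ × (Fin m → ℝ)) ∈ Gpos := by
      intro z hz
      exact ⟨hKsub z hz ⟨1, rfl⟩, by norm_num⟩
    have hKneg : ∀ z : Fin m → ℝ, Q z = -q.eval 0 →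
        ((-(r.eval (-1)), -1, z) : ℝ × ℝ × (Fin m → ℝ)) ∈ Gneg := by
      intro z hz
      exact ⟨hKsub z hz ⟨-1, rfl⟩, by norm_num⟩
    have hw0 : ((-(r.eval 0), 0, z0) : ℝ × ℝ × (Fin m → ℝ)) ∈ W :=
      hKsub z0 hz0 ⟨0, rfl⟩
    refine ⟨⟨_, hw0⟩, ?_⟩
    apply isPreconnected_of_forall ((-(r.eval 0), 0, z0) : ℝ × ℝ × (Fin m → ℝ))
    rintro ⟨x, y, z⟩ hp
    rcases lt_trichotomy y 0 with hy | hy | hy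
    · -- y < 0 : use Gneg ∪ K z0
      refine ⟨Gneg ∪ (range fun t : ℝ => ((-(r.eval t), t, z0) : ℝ × ℝ × (Fin m → ℝ))),
        union_subset hGnegW (hKsub z0 hz0), Or.inr ⟨0, rfl⟩, Or.inl ⟨hp, hy⟩, ?_⟩
      exact IsPreconnected.union _ (hKneg z0 hz0) ⟨-1, rfl⟩ hGneg (hKpre z0)
    · -- y = 0 : go through the line and curve at z
      subst hy
      have hz : Q z = -q.eval 0 := by
        have : x * 0 + q.eval 0 + Q z = 0 := hp
        linarith
      refine ⟨((range fun s : ℝ => ((s, 0, z) : ℝ × ℝ × (Fin m → ℝ))) ∪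
          (range fun t : ℝ => ((-(r.eval t), t, z) : ℝ × ℝ × (Fin m → ℝ)))) ∪
          (Gpos ∪ (range fun t : ℝ => ((-(r.eval t), t, z0) : ℝ × ℝ × (Fin m → ℝ)))),
        ?_, ?_, ?_, ?_⟩
      · exact union_subset (union_subset (hLsub z hz) (hKsub z hz))
          (union_subset hGposW (hKsub z0 hz0))
      · exact Or.inr (Or.inr ⟨0, rfl⟩)
      · exact Or.inl (Or.inl ⟨x, rfl⟩)
      · apply IsPreconnected.union ((-(r.eval 1), 1, z) : ℝ × ℝ × (Fin m → ℝ))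
        · exact Or.inr ⟨1, rfl⟩
        · exact Or.inl (hKpos z hz)
        · exact IsPreconnected.union _ ⟨-(r.eval 0), rfl⟩ ⟨0, rfl⟩ (hLpre z) (hKpre z)
        · exact IsPreconnected.union _ (hKpos z0 hz0) ⟨1, rfl⟩ hGpos (hKpre z0)
    · -- y > 0 : use Gpos ∪ K z0
      refine ⟨Gpos ∪ (range fun t : ℝ => ((-(r.eval t), t, z0) : ℝ × ℝ × (Fin m → ℝ))),
        union_subset hGposW (hKsub z0 hz0), Or.inr ⟨0, rfl⟩, Or.inl ⟨hp, hy⟩, ?_⟩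
      exact IsPreconnected.union _ (hKpos z0 hz0) ⟨1, rfl⟩ hGpos (hKpre z0)
  · -- Part (2): positive definite Q, q(0) > 0
    rintro ⟨hpd, hq0⟩
    have hU : IsOpen {p : ℝ × ℝ × (Fin m → ℝ) | 0 < p.2.1} :=
      isOpen_lt continuous_const (continuous_fst.comp continuous_snd)
    have hV : IsOpen {p : ℝ × ℝ × (Fin m → ℝ) | p.2.1 < 0} :=
      isOpen_lt (continuous_fst.comp continuous_snd) continuous_const
    have hdisj : Disjoint {p : ℝ × ℝ × (Fin m → ℝ) | 0 < p.2.1}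
        {p : ℝ × ℝ × (Fin m → ℝ) | p.2.1 < 0} :=
      Set.disjoint_left.mpr fun {p} (hp : 0 < p.2.1) (hp' : p.2.1 < 0) => lt_asymm hp hp'
    have hWsub : W ⊆ {p : ℝ × ℝ × (Fin m → ℝ) | 0 < p.2.1} ∪
        {p : ℝ × ℝ × (Fin m → ℝ) | p.2.1 < 0} := by
      intro p hp
      rcases lt_trichotomy p.2.1 0 with h | h | h
      · exact Or.inr h
      · exfalso
        have heq : p.1 * p.2.1 + q.eval p.2.1 + Q p.2.2 = 0 := hp
        rw [h] at heq
        have := hpd.nonneg p.2.2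
        simp at heq
        linarith
      · exact Or.inl h
    have hcomp : ∀ p ∈ W, 0 < p.2.1 → connectedComponentIn W p = Gpos := by
      intro p hp hpos
      apply subset_antisymm
      · have h3 : connectedComponentIn W p ⊆ {p : ℝ × ℝ × (Fin m → ℝ) | 0 < p.2.1} :=
          (isPreconnected_connectedComponentIn).subset_left_of_subset_union hU hV hdisj
            ((connectedComponentIn_subset W p).trans hWsub)
            ⟨p, mem_connectedComponentIn hp, hpos⟩
        exact fun x hx => ⟨connectedComponentIn_subset W p hx, h3 hx⟩
      · exact hGpos.subset_connectedComponentIn ⟨hp, hpos⟩ fun x hx => hx.1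
    have hcompn : ∀ p ∈ W, p.2.1 < 0 → connectedComponentIn W p = Gneg := by
      intro p hp hneg
      apply subset_antisymm
      · have h3 : connectedComponentIn W p ⊆ {p : ℝ × ℝ × (Fin m → ℝ) | p.2.1 < 0} :=
          (isPreconnected_connectedComponentIn).subset_right_of_subset_union hU hV hdisj
            ((connectedComponentIn_subset W p).trans hWsub)
            ⟨p, mem_connectedComponentIn hp, hneg⟩
        exact fun x hx => ⟨connectedComponentIn_subset W p hx, h3 hx⟩
      · exact hGneg.subset_connectedComponentIn ⟨hp, hneg⟩ fun x hx => hx.1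
    have hppos : ((-(q.eval 1), 1, 0) : ℝ × ℝ × (Fin m → ℝ)) ∈ W := by
      show -(q.eval 1) * 1 + q.eval 1 + Q 0 = 0
      rw [QuadraticMap.map_zero]; ring
    have hpneg : ((q.eval (-1), -1, 0) : ℝ × ℝ × (Fin m → ℝ)) ∈ W := by
      show q.eval (-1) * (-1) + q.eval (-1) + Q 0 = 0
      rw [QuadraticMap.map_zero]; ring
    refine ⟨Gpos, Gneg, ?_, ⟨_, hppos, hcomp _ hppos one_pos⟩,
      ⟨_, hpneg, hcompn _ hpneg (by norm_num)⟩, ?_, fun p hp => hp.2, fun p hp => hp.2⟩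
    · intro p hp
      rcases hWsub hp with h | h
      · exact Or.inl (hcomp p hp h)
      · exact Or.inr (hcompn p hp h)
    · intro h
      have h1 : ((-(q.eval 1), 1, 0) : ℝ × ℝ × (Fin m → ℝ)) ∈ Gpos :=
        ⟨hppos, mem_Ioi.mpr one_pos⟩
      rw [h] at h1
      have : (1:ℝ) < 0 := h1.2
      linarith
end
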